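/- arXiv:2212.09665 — 5 statements merged into one kernel-verified Lean document; each statement's English description precedes it below -/
import Mathlib

section
/- Let G be an infinite nilpotent profinite group. Then the center Z(G) of G is infinite. -/
open Subgroup Topology Pointwise

set_option maxHeartbeats 1000000
set_option synthInstance.maxHeartbeats 400000

universe u

/-- Core lemma: in a compact T2 group with a basis of open normal subgroups at 1,
if the center is finite then the second center (preimage of the center of `G ⧸ center G`)
is finite. -/
lemma second_center_finite {G : Type u} [Group G] [TopologicalSpace G] [IsTopologicalGroup G]
    [CompactSpace G] [T2Space G]
    (hbasis : ∀ U ∈ nhds (1 : G), ∃ H : OpenNormalSubgroup G, (H : Set G) ⊆ U)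
    (hZ : (Subgroup.center G : Set G).Finite) :
    (((Subgroup.center (G ⧸ Subgroup.center G)).comap
      (QuotientGroup.mk' (Subgroup.center G)) : Subgroup G) : Set G).Finite := by
  set Z := Subgroup.center G with hZdef
  set S := (Subgroup.center (G ⧸ Z)).comap (QuotientGroup.mk' Z) with hSdef
  -- membership characterization of S
  have hmemS : ∀ g : G, g ∈ S ↔ ∀ x : G, (x * g)⁻¹ * (g * x) ∈ Z := by
    intro g
    constructor
    · intro hg x
      have h1 := (Subgroup.mem_center_iff.mp hg) (QuotientGroup.mk x)
      have h2 : (QuotientGroup.mk (x * g) : G ⧸ Z) = QuotientGroup.mk (g * x) := by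
        simpa using h1
      exact QuotientGroup.eq.mp h2
    · intro h
      refine Subgroup.mem_center_iff.mpr ?_
      intro q
      induction q using QuotientGroup.induction_on with
      | H x =>
        show (QuotientGroup.mk x : G ⧸ Z) * QuotientGroup.mk g = QuotientGroup.mk g * QuotientGroup.mk x
        rw [← QuotientGroup.mk_mul, ← QuotientGroup.mk_mul]
        exact QuotientGroup.eq.mpr (h x)
  -- an open normal subgroup intersecting Z trivially
  have hZclosed : IsClosed (Z : Set G) := hZ.isClosed
  have hUopen : IsOpen (((Z : Set G) \ {1})ᶜ) :=
    ((hZ.subset Set.diff_subset).isClosed).isOpen_compl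
  have h1U : (1 : G) ∈ ((Z : Set G) \ {1})ᶜ := by simp
  obtain ⟨H, hH⟩ := hbasis _ (hUopen.mem_nhds h1U)
  have hHZ : ∀ g : G, g ∈ H → g ∈ Z → g = 1 := by
    intro g hgH hgZ
    have := hH hgH
    simp only [Set.mem_compl_iff, Set.mem_diff, Set.mem_singleton_iff, not_and, not_not] at this
    exact this hgZ
  -- S ∩ H ⊆ Z
  have hSH : ∀ g : G, g ∈ S → g ∈ H.toSubgroup → g ∈ Z := by
    intro g hgS hgH
    refine Subgroup.mem_center_iff.mpr ?_
    intro x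
    have h1 : (x * g)⁻¹ * (g * x) ∈ Z := (hmemS g).mp hgS x
    have h2 : (x * g)⁻¹ * (g * x) ∈ H.toSubgroup := by
      have hconj : x⁻¹ * g * x⁻¹⁻¹ ∈ H.toSubgroup := H.isNormal'.conj_mem g hgH x⁻¹
      have : g⁻¹ * (x⁻¹ * g * x⁻¹⁻¹) ∈ H.toSubgroup :=
        H.toSubgroup.mul_mem (H.toSubgroup.inv_mem hgH) hconj
      have heq : (x * g)⁻¹ * (g * x) = g⁻¹ * (x⁻¹ * g * x⁻¹⁻¹) * (x⁻¹ * x) := by group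
      rw [heq, inv_mul_cancel, mul_one]
      exact this
    have h3 : (x * g)⁻¹ * (g * x) = 1 := hHZ _ h2 h1
    exact inv_mul_eq_one.mp h3
  -- S is closed, hence compact
  have hSclosed : IsClosed (S : Set G) := by
    have : (S : Set G) = ⋂ x : G, (fun g : G => (x * g)⁻¹ * (g * x)) ⁻¹' (Z : Set G) := by
      ext g
      simp only [Set.mem_iInter, Set.mem_preimage, SetLike.mem_coe]
      exact hmemS g
    rw [this]
    exact isClosed_iInter fun x => hZclosed.preimage (by fun_prop)
  have hScpt : IsCompact (S : Set G) := hSclosed.isCompact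
  -- cover S by finitely many cosets of H
  obtain ⟨t, ht⟩ := hScpt.elim_finite_subcover (fun g : G => g • (H : Set G))
    (fun g => H.isOpen.smul g)
    (fun s _ => Set.mem_iUnion.mpr ⟨s, ⟨1, one_mem H, by simp⟩⟩)
  -- each coset meets S in a finite set
  have key : ∀ g : G, ((S : Set G) ∩ g • (H : Set G)).Finite := by
    intro g
    rcases Set.eq_empty_or_nonempty ((S : Set G) ∩ g • (H : Set G)) with he | ⟨s₀, hs₀S, hs₀H⟩
    · simp [he]
    · apply Set.Finite.subset (hZ.image fun z => s₀ * z)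
      rintro s ⟨hsS, hsH⟩
      obtain ⟨h₀, hh₀, rfl⟩ := hs₀H
      obtain ⟨h₁, hh₁, rfl⟩ := hsH
      have hmul : (g • h₀)⁻¹ * (g • h₁) = h₀⁻¹ * h₁ := by
        simp [smul_eq_mul, mul_assoc]
      have hinH : (g • h₀)⁻¹ * (g • h₁) ∈ H.toSubgroup := by
        rw [hmul]; exact H.toSubgroup.mul_mem (H.toSubgroup.inv_mem hh₀) hh₁
      have hinS : (g • h₀)⁻¹ * (g • h₁) ∈ S := S.mul_mem (S.inv_mem hs₀S) hsS
      have hinZ : (g • h₀)⁻¹ * (g • h₁) ∈ Z := hSH _ hinS hinH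
      exact ⟨(g • h₀)⁻¹ * (g • h₁), hinZ, by group⟩
  exact Set.Finite.subset
    (Set.Finite.biUnion t.finite_toSet (fun g _ => key g))
    (fun s hs => by
      obtain ⟨g, hg, hgmem⟩ := Set.mem_iUnion₂.mp (ht hs)
      exact Set.mem_iUnion₂.mpr ⟨g, hg, hs, hgmem⟩)

/-- Induction on nilpotency class: a compact T2 nilpotent group with a basis of open
normal subgroups at 1 and a finite center is finite. -/
lemma finite_of_finite_center : ∀ (n : ℕ) (G : Type u) [Group G] [TopologicalSpace G]
    [IsTopologicalGroup G] [CompactSpace G] [T2Space G],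
    (∀ U ∈ nhds (1 : G), ∃ H : OpenNormalSubgroup G, (H : Set G) ⊆ U) →
    ∀ [Group.IsNilpotent G], Group.nilpotencyClass G ≤ n →
    (Subgroup.center G : Set G).Finite → Finite G := by
  intro n
  induction n with
  | zero =>
    intro G _ _ _ _ _ hbasis _ hle _
    have : Subsingleton G :=
      nilpotencyClass_zero_iff_subsingleton.mp (Nat.le_zero.mp hle)
    exact Finite.of_subsingleton
  | succ n ih =>
    intro G _ _ _ _ _ hbasis _ hle hZfin
    haveI hZcl : IsClosed ((Subgroup.center G : Subgroup G) : Set G) := hZfin.isClosed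
    -- center of the quotient is finite
    have hA := second_center_finite hbasis hZfin
    have hcQ : (Subgroup.center (G ⧸ Subgroup.center G) : Set (G ⧸ Subgroup.center G)).Finite := by
      have heq : Subgroup.center (G ⧸ Subgroup.center G) =
          Subgroup.map (QuotientGroup.mk' (Subgroup.center G))
            ((Subgroup.center (G ⧸ Subgroup.center G)).comap
              (QuotientGroup.mk' (Subgroup.center G))) :=
        (Subgroup.map_comap_eq_self_of_surjective
          (QuotientGroup.mk'_surjective (Subgroup.center G)) _).symm
      rw [heq, Subgroup.coe_map]
      exact hA.image _
    -- basis of open normal subgroups for the quotient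
    have hbasisQ : ∀ U ∈ nhds (1 : G ⧸ Subgroup.center G),
        ∃ H : OpenNormalSubgroup (G ⧸ Subgroup.center G), (H : Set _) ⊆ U := by
      intro U hU
      have hpre : (QuotientGroup.mk ⁻¹' U : Set G) ∈ nhds (1 : G) := by
        have hc : Continuous (QuotientGroup.mk : G → G ⧸ Subgroup.center G) :=
          continuous_quotient_mk'
        exact hc.continuousAt.preimage_mem_nhds (by rwa [QuotientGroup.mk_one])
      obtain ⟨H, hH⟩ := hbasis _ hpre
      refine ⟨⟨⟨H.toSubgroup.map (QuotientGroup.mk' (Subgroup.center G)), ?_⟩, ?_⟩, ?_⟩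
      · show IsOpen ((H.toSubgroup.map (QuotientGroup.mk' (Subgroup.center G)) : Subgroup _) : Set (G ⧸ Subgroup.center G))
        rw [Subgroup.coe_map]
        exact QuotientGroup.isOpenQuotientMap_mk.isOpenMap _ H.isOpen
      · exact Subgroup.Normal.map H.isNormal' _
          (QuotientGroup.mk'_surjective (Subgroup.center G))
      · rintro q ⟨g, hgH, rfl⟩
        exact hH hgH
    have hclsQ : Group.nilpotencyClass (G ⧸ Subgroup.center G) ≤ n := by
      rw [nilpotencyClass_quotient_center]
      omega
    haveI hQfin : Finite (G ⧸ Subgroup.center G) := ih _ hbasisQ hclsQ hcQ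
    haveI hZfin' : Finite (Subgroup.center G) := hZfin.to_subtype
    exact Finite.of_equiv _ (Subgroup.groupEquivQuotientProdSubgroup
      (s := Subgroup.center G)).symm

theorem stmt4 {G : Type*} [Group G] [TopologicalSpace G] [IsTopologicalGroup G]
    [CompactSpace G] [T2Space G] [TotallyDisconnectedSpace G]
    (hinf : Infinite G) (hnilp : Group.IsNilpotent G) :
    (Subgroup.center G : Set G).Infinite := by
  haveI := hinf
  haveI := hnilp
  by_contra h
  rw [Set.not_infinite] at h
  have hbasis : ∀ U ∈ nhds (1 : G), ∃ H : OpenNormalSubgroup G, (H : Set G) ⊆ U := by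
    intro U hU
    obtain ⟨W, hWclopen, h1W, hWU⟩ := isTopologicalBasis_isClopen.mem_nhds_iff.mp hU
    obtain ⟨H, hH⟩ :=
      IsTopologicalGroup.exist_openNormalSubgroup_sub_clopen_nhds_of_one hWclopen h1W
    exact ⟨H, hH.trans hWU⟩
  haveI : Finite G := finite_of_finite_center (Group.nilpotencyClass G) G hbasis le_rfl h
  exact not_finite G
end

section
/- Let k ≥ 1 and let G be a profinite group. Then the closed subgroup of G topologically generated by the set 𝒰_k(G) of uniform k-step commutators equals γ_k(G). -/
open Pointwise
open scoped commutatorElement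

/-- The commutator `[a,b] = a⁻¹ * b⁻¹ * a * b`. -/
def pcomm {G : Type*} [Group G] (a b : G) : G := a⁻¹ * b⁻¹ * a * b

/-- Left-normed commutator `[x₁,…,xₙ]` of a list of group elements
(equal to `1` for the empty list). -/
def lnc {G : Type*} [Group G] : List G → G
  | [] => 1
  | a :: t => t.foldl pcomm a

/-- `p` divides the order of the image of `x` in `G ⧸ N`. -/
def pDvdOrderInQuot {G : Type*} [Group G] (N : Subgroup G) [N.Normal] (x : G) (p : ℕ) :
    Prop :=
  p ∣ orderOf (QuotientGroup.mk' N x)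

/-- `π(x)`: the set of primes dividing the order of the image of `x` in some
quotient of `G` by an open normal subgroup (i.e. in some finite continuous
quotient, when `G` is profinite). -/
def primesOf {G : Type*} [Group G] [TopologicalSpace G] (x : G) : Set ℕ :=
  {p | p.Prime ∧ ∃ (N : Subgroup G) (hN : N.Normal), IsOpen (N : Set G) ∧
    @pDvdOrderInQuot G _ N hN x p}

/-- `g` is a uniform `k`-step commutator: `g = [x₁,…,x_k]` (left-normed) with
`π(x₁) = ⋯ = π(x_k)`. -/
def IsUniformCommutator {G : Type*} [Group G] [TopologicalSpace G] (k : ℕ) (g : G) : Prop :=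
  ∃ x : Fin k → G, (∀ i j, primesOf (x i) = primesOf (x j)) ∧ g = lnc (List.ofFn x)

set_option linter.unusedSectionVars false
set_option linter.unnecessarySimpa false
set_option linter.deprecated false
set_option maxHeartbeats 1000000

section LncLemmas
variable {G : Type*} [Group G] {H : Type*} [Group H]

@[simp] lemma pcomm_one_left (a : G) : pcomm 1 a = 1 := by simp [pcomm]
@[simp] lemma pcomm_one_right (a : G) : pcomm a 1 = 1 := by simp [pcomm]

lemma foldl_pcomm_one (t : List G) : t.foldl pcomm 1 = 1 := by
  induction t with
  | nil => rfl
  | cons a t ih => simpa using ih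

lemma lnc_cons (a : G) (t : List G) : lnc (a :: t) = t.foldl pcomm a := rfl

lemma lnc_concat (h : G) (t : List G) (a : G) :
    lnc (h :: (t ++ [a])) = pcomm (lnc (h :: t)) a := by
  simp [lnc, List.foldl_append]

lemma lnc_map (f : G →* H) (l : List G) : f (lnc l) = lnc (l.map f) := by
  cases l with
  | nil => simp [lnc]
  | cons a t =>
    simp only [lnc, List.map_cons]
    induction t generalizing a with
    | nil => simp
    | cons b t ih => simpa [pcomm] using ih (pcomm a b)

lemma lnc_mem_lowerCentralSeries (h : G) (t : List G) :
    lnc (h :: t) ∈ Subgroup.lowerCentralSeries (⊤ : Subgroup G) t.length := by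
  induction t using List.reverseRecOn with
  | nil => simp [lnc]
  | append_singleton t a ih =>
    rw [lnc_concat]
    have : pcomm (lnc (h :: t)) a = ⁅(lnc (h :: t))⁻¹, a⁻¹⁆ := by
      simp [pcomm, commutatorElement_def]
    rw [this, List.length_append]
    simp only [List.length_cons, List.length_nil]
    rw [Subgroup.lowerCentralSeries_succ]
    exact Subgroup.commutator_mem_commutator (Subgroup.inv_mem _ ih) (Subgroup.mem_top _)

lemma lnc_eq_one_of_mem_one (l : List G) (hl : (1 : G) ∈ l) : lnc l = 1 := by
  obtain ⟨l₁, l₂, rfl⟩ := List.append_of_mem hl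
  cases l₁ with
  | nil => simpa [lnc] using foldl_pcomm_one l₂
  | cons h t =>
    have : lnc (h :: t ++ 1 :: l₂) = l₂.foldl pcomm (pcomm (t.foldl pcomm h) 1) := by
      simp [lnc, List.foldl_append]
    rw [show (h :: t ++ 1 :: l₂ : List G) = h :: (t ++ 1 :: l₂) by simp] at this ⊢
    rw [this]
    simpa using foldl_pcomm_one l₂

lemma pcomm_eq_one_of_commute {a b : G} (h : Commute a b) : pcomm a b = 1 := by
  simp only [pcomm, mul_assoc]
  rw [h.eq, ← mul_assoc b⁻¹, inv_mul_cancel, one_mul, inv_mul_cancel]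

end LncLemmas

lemma orderOf_conj' {G : Type*} [Group G] (g x : G) : orderOf (g * x * g⁻¹) = orderOf x := by
  have := orderOf_injective (MulAut.conj g).toMonoidHom (MulAut.conj g).injective x
  simpa [MulAut.conj_apply] using this

universe u

lemma lemmaStar : ∀ (k : ℕ), 1 ≤ k → ∀ (G : Type u) (_ : Group G) (S : Set G),
    Subgroup.closure S = ⊤ →
    (∀ x : Fin k → G, (∀ i, x i ∈ S) → lnc (List.ofFn x) = 1) →
    Subgroup.lowerCentralSeries (⊤ : Subgroup G) (k-1) = ⊥ := by
  intro k hk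
  induction k, hk using Nat.le_induction with
  | base =>
    intro G _ S hS Hyp
    have hS1 : S ⊆ ({1} : Set G) := by
      intro s hs
      have := Hyp (fun _ => s) (fun _ => hs)
      simpa [lnc, List.ofFn_succ] using this
    have : (⊤ : Subgroup G) = ⊥ := by
      rw [← hS]
      refine le_bot_iff.mp ?_
      calc Subgroup.closure S ≤ Subgroup.closure {1} := Subgroup.closure_mono hS1
        _ ≤ ⊥ := by simp
    simpa using this
  | succ k hk ih =>
    intro G _ S hS Hyp
    -- every lnc of a k-tuple from S is central
    have central : ∀ x : Fin k → G, (∀ i, x i ∈ S) → lnc (List.ofFn x) ∈ Subgroup.center G := by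
      intro x hx
      have hcomm : ∀ s ∈ S, s * lnc (List.ofFn x) = lnc (List.ofFn x) * s := by
        intro s hs
        have h1 : lnc (List.ofFn (Fin.snoc x s : Fin (k+1) → G)) = 1 := by
          apply Hyp
          intro i
          induction i using Fin.lastCases with
          | last => simpa using hs
          | cast j => simpa using hx j
        have hofn : List.ofFn (Fin.snoc x s : Fin (k+1) → G) = (List.ofFn x) ++ [s] := by
          rw [List.ofFn_succ']
          simp [List.concat_eq_append]
        obtain ⟨h, t, hht⟩ : ∃ h t, List.ofFn x = h :: t := by
          have : List.ofFn x ≠ [] := by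
            simp [List.ofFn_eq_nil_iff]; omega
          exact List.exists_cons_of_ne_nil this
        rw [hofn, hht] at h1
        rw [show (h :: t) ++ [s] = h :: (t ++ [s]) by simp] at h1
        rw [lnc_concat, ← hht] at h1
        set w := lnc (List.ofFn x) with hw
        have h3 : w⁻¹ * (s⁻¹ * (w * s)) = 1 := by
          rw [← h1]; simp [pcomm, mul_assoc]
        have h4 : s⁻¹ * (w * s) = w := by
          have := congrArg (fun z => w * z) h3
          simpa [← mul_assoc] using this
        have h5 := congrArg (fun z => s * z) h4
        rw [← mul_assoc, ← mul_assoc, mul_inv_cancel, one_mul] at h5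
        exact h5.symm
      rw [Subgroup.mem_center_iff]
      intro g
      have hg : g ∈ Subgroup.closure S := by rw [hS]; trivial
      induction hg using Subgroup.closure_induction with
      | mem s hs => exact hcomm s hs
      | one => simp
      | mul a b _ _ ha hb => rw [mul_assoc, hb, ← mul_assoc, ha, mul_assoc]
      | inv a _ ha =>
        have := ha
        calc a⁻¹ * lnc (List.ofFn x) = a⁻¹ * lnc (List.ofFn x) * a * a⁻¹ := by group
          _ = a⁻¹ * (a * lnc (List.ofFn x)) * a⁻¹ := by rw [mul_assoc (a⁻¹), this]
          _ = lnc (List.ofFn x) * a⁻¹ := by group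
    -- pass to the quotient by the center
    set Z := Subgroup.center G
    let π : G →* G ⧸ Z := QuotientGroup.mk' Z
    have hπsurj : Function.Surjective π := QuotientGroup.mk'_surjective Z
    have hSbar : Subgroup.closure (π '' S) = ⊤ := by
      rw [← MonoidHom.map_closure, hS, ← MonoidHom.range_eq_map,
        MonoidHom.range_eq_top_of_surjective _ hπsurj]
    have HypBar : ∀ y : Fin k → (G ⧸ Z), (∀ i, y i ∈ π '' S) → lnc (List.ofFn y) = 1 := by
      intro y hy
      choose x hxS hxy using hy
      have : lnc (List.ofFn y) = π (lnc (List.ofFn x)) := by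
        rw [lnc_map, List.map_ofFn, show ⇑π ∘ x = y from funext hxy]
      rw [this, QuotientGroup.mk'_apply, QuotientGroup.eq_one_iff]
      exact central x hxS
    have hquot := ih (G ⧸ Z) _ (π '' S) hSbar HypBar
    have hle : Subgroup.lowerCentralSeries (⊤ : Subgroup G) (k-1) ≤ Z := by
      intro g hg
      have : π g ∈ Subgroup.map π (Subgroup.lowerCentralSeries (⊤ : Subgroup G) (k-1)) := Subgroup.mem_map_of_mem _ hg
      have h2 : π g ∈ Subgroup.lowerCentralSeries (⊤ : Subgroup (G ⧸ Z)) (k-1) := Subgroup.lowerCentralSeries.map π (k-1) this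
      rw [hquot] at h2
      have hone : π g = 1 := h2
      rw [QuotientGroup.mk'_apply, QuotientGroup.eq_one_iff] at hone
      exact hone
    have hsucc : k + 1 - 1 = (k - 1) + 1 := by omega
    rw [hsucc, Subgroup.lowerCentralSeries_succ, eq_bot_iff]
    refine (Subgroup.closure_le _).mpr ?_
    rintro _ ⟨p, hp, q, -, rfl⟩
    have hpz : p ∈ Z := hle hp
    have hc : q * p = p * q := Subgroup.mem_center_iff.mp hpz q
    have : p * q * p⁻¹ * q⁻¹ = 1 := by
      rw [← hc, mul_assoc, mul_assoc]
      simp [← mul_assoc]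
    simp [commutatorElement_def, this, Subgroup.mem_bot]

lemma closure_primePow_eq_top {Q : Type*} [Group Q] [Finite Q] :
    Subgroup.closure {x : Q | ∃ p a, Nat.Prime p ∧ orderOf x = p ^ a} = ⊤ := by
  rw [eq_top_iff]
  intro g _
  set S : Set Q := {x : Q | ∃ p a, Nat.Prime p ∧ orderOf x = p ^ a} with hSdef
  suffices H : ∀ n : ℕ, ∀ g : Q, orderOf g = n → g ∈ Subgroup.closure S from
    H (orderOf g) g rfl
  intro n
  induction n using Nat.strong_induction_on with
  | _ n ih =>
    intro g hg
    have hpos : 0 < n := hg ▸ (isOfFinOrder_of_finite g).orderOf_pos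
    rcases eq_or_lt_of_le (show 1 ≤ n from hpos) with h1 | h2
    · have hgone : g = 1 := orderOf_eq_one_iff.mp (by rw [hg, ← h1])
      exact hgone ▸ Subgroup.one_mem _
    · set p := n.minFac with hp
      have hprime : p.Prime := Nat.minFac_prime (by omega)
      have hpdvd : p ∣ n := Nat.minFac_dvd n
      set m₁ := p ^ n.factorization p with hm₁
      set m₂ := n / m₁ with hm₂
      have hmul : m₁ * m₂ = n := Nat.ordProj_mul_ordCompl_eq_self n p
      have hb : 0 < n.factorization p :=
        hprime.factorization_pos_of_dvd (by omega) hpdvd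
      have hm₁2 : 2 ≤ m₁ := by
        calc 2 ≤ p := hprime.two_le
        _ = p ^ 1 := (pow_one p).symm
        _ ≤ p ^ n.factorization p := Nat.pow_le_pow_right hprime.pos hb
      have hm₂pos : 0 < m₂ := by
        rcases Nat.eq_zero_or_pos m₂ with h | h
        · rw [h, mul_zero] at hmul; omega
        · exact h
      have hcop : Nat.Coprime m₁ m₂ :=
        Nat.Coprime.pow_left _ (Nat.coprime_ordCompl hprime (by omega))
      by_cases hm21 : m₂ = 1
      · have hgo : orderOf g = m₁ := by
          rw [hg]
          conv_lhs => rw [← hmul, hm21]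
          rw [mul_one]
        exact Subgroup.subset_closure ⟨p, n.factorization p, hprime, hgo⟩
      · have hm₂lt : m₂ < n := by nlinarith
        have hm₁lt : m₁ < n := by
          have : 2 ≤ m₂ := by omega
          nlinarith
        -- Bezout
        set u := Nat.gcdA m₁ m₂ with hu
        set v := Nat.gcdB m₁ m₂ with hv
        have hbez : (1 : ℤ) = m₁ * u + m₂ * v := by
          have := Nat.gcd_eq_gcd_ab m₁ m₂
          rwa [Nat.Coprime.gcd_eq_one hcop] at this
        set g₁ := g ^ ((m₁ : ℤ) * u) with hg₁
        set g₂ := g ^ ((m₂ : ℤ) * v) with hg₂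
        have hgsplit : g = g₁ * g₂ := by
          rw [hg₁, hg₂, ← zpow_add, ← hbez, zpow_one]
        have hgn : g ^ (n : ℤ) = 1 := by
          rw [zpow_natCast, ← hg, pow_orderOf_eq_one]
        have ho₁ : orderOf g₁ ∣ m₂ := by
          rw [orderOf_dvd_iff_pow_eq_one, hg₁, ← zpow_natCast, ← zpow_mul]
          have : (m₁ : ℤ) * u * m₂ = n * u := by push_cast [← hmul]; ring
          rw [this, zpow_mul, hgn, one_zpow]
        have ho₂ : orderOf g₂ ∣ m₁ := by
          rw [orderOf_dvd_iff_pow_eq_one, hg₂, ← zpow_natCast, ← zpow_mul]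
          have : (m₂ : ℤ) * v * m₁ = n * v := by push_cast [← hmul]; ring
          rw [this, zpow_mul, hgn, one_zpow]
        have h₁mem : g₁ ∈ Subgroup.closure S :=
          ih (orderOf g₁) (lt_of_le_of_lt (Nat.le_of_dvd hm₂pos ho₁) hm₂lt) g₁ rfl
        have h₂mem : g₂ ∈ Subgroup.closure S :=
          ih (orderOf g₂) (lt_of_le_of_lt (Nat.le_of_dvd (by omega) ho₂) hm₁lt) g₂ rfl
        rw [hgsplit]
        exact Subgroup.mul_mem _ h₁mem h₂mem

/-- the set of `q`-elements of a group -/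
def qElems (Q : Type*) [Group Q] (q : ℕ) : Set Q := {x | ∃ a, orderOf x = q ^ a}

section TSub
variable {Q : Type*} [Group Q] [Finite Q]

lemma exists_T (k : ℕ) (hk : 1 ≤ k) (q : ℕ) (hq : q.Prime)
    (HypQ : ∀ x : Fin k → Q, (∀ i, x i ≠ 1) →
      (∀ i, ∃ a, orderOf (x i) = q ^ a) → lnc (List.ofFn x) = 1) :
    ∃ T : Subgroup Q, ∀ x : Q,
      x ∈ T ↔ (x ∈ Subgroup.closure (qElems Q q) ∧ ∃ a, orderOf x = q ^ a) := by
  haveI : Fact q.Prime := ⟨hq⟩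
  set K := Subgroup.closure (qElems Q q) with hK
  set S' : Set ↥K := {y : ↥K | ∃ a, orderOf y = q ^ a} with hS'
  have hS'top : Subgroup.closure S' = ⊤ := by
    have : S' = (((↑) : ↥K → Q) ⁻¹' (qElems Q q)) := by
      ext y
      simp only [hS', Set.mem_setOf_eq, Set.mem_preimage, qElems, Subgroup.orderOf_coe]
    rw [this, hK]
    exact Subgroup.closure_closure_coe_preimage
  have Hyp' : ∀ y : Fin k → ↥K, (∀ i, y i ∈ S') → lnc (List.ofFn y) = 1 := by
    intro y hy
    by_cases hcase : ∀ i, y i ≠ 1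
    · have h1 : lnc (List.ofFn fun i => ((y i : Q))) = 1 := by
        apply HypQ
        · exact fun i h => hcase i (OneMemClass.coe_eq_one.mp h)
        · intro i
          obtain ⟨a, ha⟩ := hy i
          exact ⟨a, by rw [Subgroup.orderOf_coe]; exact ha⟩
      apply K.subtype_injective
      rw [lnc_map K.subtype, List.map_ofFn]
      simpa [Function.comp_def] using h1
    · push_neg at hcase
      obtain ⟨i, hi⟩ := hcase
      apply lnc_eq_one_of_mem_one
      rw [List.mem_ofFn]
      exact ⟨i, hi⟩
  have hlcs : Subgroup.lowerCentralSeries (⊤ : Subgroup ↥K) (k - 1) = ⊥ := lemmaStar k hk ↥K _ S' hS'top Hyp'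
  have hnilp : Group.IsNilpotent ↥K := Subgroup.nilpotent_iff_lowerCentralSeries.mpr ⟨k - 1, hlcs⟩
  obtain ⟨P⟩ := (inferInstance : Nonempty (Sylow q ↥K))
  have tfae34 := (isNilpotent_of_finite_tfae (G := ↥K)).out 0 3
  have hPnormal : (↑P : Subgroup ↥K).Normal := tfae34.mp hnilp q ⟨hq⟩ P
  haveI : Unique (Sylow q ↥K) := Sylow.unique_of_normal P hPnormal
  refine ⟨(↑P : Subgroup ↥K).map K.subtype, fun x => ⟨?_, ?_⟩⟩
  · rintro ⟨y, hyP, rfl⟩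
    refine ⟨by simpa using y.2, ?_⟩
    obtain ⟨c, hc⟩ := P.isPGroup' ⟨y, hyP⟩
    have hdvd : orderOf (⟨y, hyP⟩ : ↥(P : Subgroup ↥K)) ∣ q ^ c := orderOf_dvd_of_pow_eq_one hc
    rw [Subgroup.orderOf_mk] at hdvd
    have : orderOf (K.subtype y) = orderOf y := Subgroup.orderOf_coe y
    rw [this]
    obtain ⟨a, _, ha⟩ := (Nat.dvd_prime_pow hq).mp hdvd
    exact ⟨a, ha⟩
  · rintro ⟨hxK, a, ha⟩
    set y : ↥K := ⟨x, hxK⟩ with hy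
    have hyo : orderOf y = q ^ a := by rw [Subgroup.orderOf_mk]; exact ha
    have hPg : IsPGroup q (Subgroup.zpowers y) := by
      intro g
      refine ⟨a, ?_⟩
      apply Subtype.ext
      obtain ⟨m, hm⟩ := g.2
      push_cast
      rw [← hm, ← zpow_natCast, ← zpow_mul, mul_comm, zpow_mul, zpow_natCast, ← hyo,
        pow_orderOf_eq_one, one_zpow]
    obtain ⟨P', hP'⟩ := hPg.exists_le_sylow
    have hPP : P' = P := Subsingleton.elim _ _
    exact ⟨y, hPP ▸ hP' (Subgroup.mem_zpowers y), rfl⟩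

end TSub

section FiniteThm
variable {Q : Type*} [Group Q] [Finite Q]


lemma Kq_normal (q : ℕ) : (Subgroup.closure (qElems Q q)).Normal := by
  constructor
  intro n hn g
  have himg : ⇑(MulAut.conj g).toMonoidHom '' (qElems Q q) = qElems Q q := by
    ext x
    constructor
    · rintro ⟨y, ⟨a, ha⟩, rfl⟩
      exact ⟨a, by simpa [MulAut.conj_apply, orderOf_conj'] using ha⟩
    · rintro ⟨a, ha⟩
      refine ⟨g⁻¹ * x * g, ⟨a, ?_⟩, by simp [MulAut.conj_apply]; group⟩
      have := orderOf_conj' g⁻¹ x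
      simpa using this.trans ha
  have hmem := Subgroup.mem_map_of_mem (MulAut.conj g).toMonoidHom hn
  rw [MonoidHom.map_closure, himg] at hmem
  simpa [MulAut.conj_apply] using hmem

theorem finiteThm (k : ℕ) (hk : 1 ≤ k)
    (Hyp : ∀ q : ℕ, q.Prime → ∀ x : Fin k → Q, (∀ i, x i ≠ 1) →
      (∀ i, ∃ a, orderOf (x i) = q ^ a) → lnc (List.ofFn x) = 1) :
    Subgroup.lowerCentralSeries (⊤ : Subgroup Q) (k - 1) = ⊥ := by
  have hTex : ∀ q : ℕ, q.Prime → ∃ T : Subgroup Q, ∀ x : Q,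
      x ∈ T ↔ (x ∈ Subgroup.closure (qElems Q q) ∧ ∃ a, orderOf x = q ^ a) :=
    fun q hq => exists_T k hk q hq (Hyp q hq)
  choose T hTmem using hTex
  have hTnorm : ∀ q (hq : q.Prime), (T q hq).Normal := by
    intro q hq
    constructor
    intro n hn g
    rw [hTmem] at hn ⊢
    obtain ⟨hnK, a, ha⟩ := hn
    refine ⟨(Kq_normal q).conj_mem n hnK g, a, by rw [orderOf_conj']; exact ha⟩
  have hqin : ∀ q (hq : q.Prime) (x : Q) (a : ℕ), orderOf x = q ^ a → x ∈ T q hq := by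
    intro q hq x a ha
    exact (hTmem q hq x).mpr ⟨Subgroup.subset_closure ⟨a, ha⟩, a, ha⟩
  have hcomm : ∀ p q (hp : p.Prime) (hq : q.Prime), p ≠ q →
      ∀ x ∈ T p hp, ∀ y ∈ T q hq, Commute x y := by
    intro p q hp hq hne x hx y hy
    haveI := hTnorm p hp
    haveI := hTnorm q hq
    have h1 : ⁅x, y⁆ ∈ ⁅T p hp, T q hq⁆ := Subgroup.commutator_mem_commutator hx hy
    have h2 : ⁅T p hp, T q hq⁆ ≤ T p hp ⊓ T q hq :=
      le_inf (Subgroup.commutator_le_left _ _) (Subgroup.commutator_le_right _ _)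
    obtain ⟨hxc, hyc⟩ := h2 h1
    obtain ⟨-, a, ha⟩ := (hTmem p hp _).mp hxc
    obtain ⟨-, b, hb⟩ := (hTmem q hq _).mp hyc
    rcases Nat.eq_zero_or_pos a with ha0 | ha0
    · rw [ha0, pow_zero] at ha
      exact commutatorElement_eq_one_iff_commute.mp (orderOf_eq_one_iff.mp ha)
    · exfalso
      have hpd : p ∣ q ^ b := by
        rw [← hb, ha]
        exact dvd_pow_self p (by omega)
      exact hne ((Nat.prime_dvd_prime_iff_eq hp hq).mp (hp.dvd_of_dvd_pow hpd))
  -- main assembly via lemmaStar with all prime power elements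
  apply lemmaStar k hk Q _ {x : Q | ∃ p a, Nat.Prime p ∧ orderOf x = p ^ a}
    closure_primePow_eq_top
  intro x hx
  by_cases hone : ∃ i, x i = 1
  · obtain ⟨i, hi⟩ := hone
    exact lnc_eq_one_of_mem_one _ (by rw [List.mem_ofFn]; exact ⟨i, hi⟩)
  push_neg at hone
  have claimC : ∀ (t : List Q), (∀ y ∈ t, y ∈ {x : Q | ∃ p a, Nat.Prime p ∧ orderOf x = p ^ a}) →
      ∀ (p : ℕ) (hp : p.Prime) (acc : Q), acc ∈ T p hp →
      (t.foldl pcomm acc = 1 ∨ ((∀ y ∈ t, ∃ a, orderOf y = p ^ a) ∧ t.foldl pcomm acc ∈ T p hp)) := by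
    intro t
    induction t with
    | nil => intro _ p hp acc hacc; exact Or.inr ⟨by simp, by simpa using hacc⟩
    | cons y t ih =>
      intro hall p hp acc hacc
      by_cases hyq : ∃ a, orderOf y = p ^ a
      · obtain ⟨a, ha⟩ := hyq
        have hyT : y ∈ T p hp := hqin p hp y a ha
        have haccT : pcomm acc y ∈ T p hp := by
          simp only [pcomm]
          exact Subgroup.mul_mem _ (Subgroup.mul_mem _ (Subgroup.mul_mem _
            (Subgroup.inv_mem _ hacc) (Subgroup.inv_mem _ hyT)) hacc) hyT
        rcases ih (fun z hz => hall z (List.mem_cons_of_mem y hz)) p hp _ haccT with h | ⟨h1, h2⟩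
        · exact Or.inl (by simpa using h)
        · refine Or.inr ⟨?_, by simpa using h2⟩
          intro z hz
          rcases List.mem_cons.mp hz with rfl | hz'
          · exact ⟨a, ha⟩
          · exact h1 z hz'
      · obtain ⟨q, b, hq, hb⟩ := hall y List.mem_cons_self
        have hne : q ≠ p := fun h => hyq ⟨b, h ▸ hb⟩
        have hyT : y ∈ T q hq := hqin q hq y b hb
        have : pcomm acc y = 1 :=
          pcomm_eq_one_of_commute (hcomm p q hp hq (Ne.symm hne) acc hacc y hyT)
        refine Or.inl ?_
        have : List.foldl pcomm acc (y :: t) = List.foldl pcomm 1 t := by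
          simp [this]
        rw [this, foldl_pcomm_one]
  -- apply the claim
  rcases k with - | k'
  · omega
  obtain ⟨p, a, hp, hpa⟩ := hx 0
  have hx0T : x 0 ∈ T p hp := hqin p hp (x 0) a hpa
  have hofn : List.ofFn x = x 0 :: List.ofFn (fun i : Fin k' => x i.succ) := List.ofFn_succ (f := x)
  have htail : ∀ y ∈ List.ofFn (fun i : Fin k' => x i.succ),
      y ∈ {x : Q | ∃ p a, Nat.Prime p ∧ orderOf x = p ^ a} := by
    intro y hy
    rw [List.mem_ofFn] at hy
    obtain ⟨j, rfl⟩ := hy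
    exact hx j.succ
  rcases claimC _ htail p hp (x 0) hx0T with h | ⟨h1, -⟩
  · rw [hofn]
    exact h
  · apply Hyp p hp x hone
    intro i
    induction i using Fin.cases with
    | zero => exact ⟨a, hpa⟩
    | succ j => exact h1 (x j.succ) (by rw [List.mem_ofFn]; exact ⟨j, rfl⟩)

end FiniteThm

section Profinite
open Pointwise
variable {G : Type*} [Group G] [TopologicalSpace G] [IsTopologicalGroup G] [CompactSpace G]

lemma discreteQuot (N : Subgroup G) [N.Normal] (hN : IsOpen (N : Set G)) :
    DiscreteTopology (G ⧸ N) := by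
  rw [discreteTopology_iff_isOpen_singleton]
  intro q
  obtain ⟨x, rfl⟩ := QuotientGroup.mk'_surjective N q
  have h1 : ({QuotientGroup.mk' N x} : Set (G ⧸ N)) =
      QuotientGroup.mk '' (x • (N : Set G)) := by
    ext z
    simp only [Set.mem_singleton_iff, Set.mem_image]
    constructor
    · rintro rfl
      exact ⟨x, ⟨1, N.one_mem, by simp⟩, rfl⟩
    · rintro ⟨w, ⟨n, hn, rfl⟩, rfl⟩
      simp only [smul_eq_mul, QuotientGroup.mk'_apply]
      exact (QuotientGroup.mk_mul_of_mem x hn)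
  rw [h1]
  exact QuotientGroup.isOpenMap_coe _ (hN.smul x)

lemma finiteQuot (N : Subgroup G) [N.Normal] (hN : IsOpen (N : Set G)) :
    Finite (G ⧸ N) := by
  haveI := discreteQuot N hN
  exact finite_of_compact_of_discrete

lemma orderOf_quot_dvd (N N' : Subgroup G) [N.Normal] [N'.Normal] (h : N ≤ N') (x : G) :
    orderOf (QuotientGroup.mk' N' x) ∣ orderOf (QuotientGroup.mk' N x) := by
  have hc : N ≤ Subgroup.comap (MonoidHom.id G) N' := by simpa using h
  have := orderOf_map_dvd (QuotientGroup.map N N' (MonoidHom.id G) hc) (QuotientGroup.mk' N x)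
  rwa [QuotientGroup.map_mk' N N' _ _ x] at this

end Profinite

section Profinite2
variable {G : Type*} [Group G] [TopologicalSpace G] [IsTopologicalGroup G] [CompactSpace G]

lemma lift_qelem (M : Subgroup G) [M.Normal] (hM : IsOpen (M : Set G)) (q : ℕ) (hq : q.Prime)
    (xb : G ⧸ M) (hx1 : xb ≠ 1) (a : ℕ) (ha : orderOf xb = q ^ a) :
    ∃ x : G, QuotientGroup.mk' M x = xb ∧ primesOf x = {q} := by
  haveI : Finite (G ⧸ M) := finiteQuot M hM
  have hapos : 0 < a := by
    rcases Nat.eq_zero_or_pos a with h | h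
    · exact absurd (orderOf_eq_one_iff.mp (by rw [ha, h, pow_zero])) hx1
    · exact h
  let ι := {N : Subgroup G // N.Normal ∧ IsOpen (N : Set G) ∧ N ≤ M}
  haveI : Nonempty ι := ⟨⟨M, inferInstance, hM, le_rfl⟩⟩
  let Z : ι → Set G := fun N =>
    letI := N.2.1
    {x : G | QuotientGroup.mk' M x = xb ∧
      ∃ b, orderOf (QuotientGroup.mk' N.1 x) = q ^ b}
  have hZclosed : ∀ N : ι, IsClosed (Z N) := by
    rintro ⟨N, hNn, hNo, hNM⟩
    haveI := hNn
    haveI := discreteQuot N hNo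
    haveI := discreteQuot M hM
    have h1 : IsClosed {x : G | QuotientGroup.mk' M x = xb} :=
      IsClosed.preimage continuous_quotient_mk' (isClosed_discrete {xb})
    have h2 : IsClosed {x : G | ∃ b, orderOf (QuotientGroup.mk' N x) = q ^ b} :=
      IsClosed.preimage continuous_quotient_mk'
        (isClosed_discrete {z : G ⧸ N | ∃ b, orderOf z = q ^ b})
    exact h1.inter h2
  have hZne : ∀ N : ι, (Z N).Nonempty := by
    rintro ⟨N, hNn, hNo, hNM⟩
    haveI := hNn
    haveI : Finite (G ⧸ N) := finiteQuot N hNo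
    obtain ⟨y, hy⟩ := QuotientGroup.mk'_surjective M xb
    set z := QuotientGroup.mk' N y with hz
    set n := orderOf z with hn
    have hnpos : 0 < n := (isOfFinOrder_of_finite z).orderOf_pos
    set b := n.factorization q with hb
    set m := n / q ^ b with hm
    have hmul : q ^ b * m = n := Nat.ordProj_mul_ordCompl_eq_self n q
    have hmpos : 0 < m := Nat.ordCompl_pos q (by omega)
    have hcop : Nat.Coprime (q ^ b) m :=
      Nat.Coprime.pow_left _ (Nat.coprime_ordCompl hq (by omega))
    have hdvd1 : orderOf xb ∣ n := by
      rw [← hy]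
      exact orderOf_quot_dvd N M hNM y
    have haleb : q ^ a ∣ q ^ b := by
      have h1 : q ^ a ∣ q ^ b * m := by rw [hmul, ← ha]; exact hdvd1
      exact Nat.Coprime.dvd_of_dvd_mul_right
        (Nat.Coprime.pow_left _ (Nat.coprime_ordCompl hq (by omega))) h1
    have hqb1 : 1 < q ^ b := by
      have h2 : 1 < q ^ a := Nat.one_lt_pow (by omega) hq.one_lt
      have h3 : 0 < q ^ b := pow_pos hq.pos b
      have h4 := Nat.le_of_dvd h3 haleb
      omega
    obtain ⟨c, hc1, hc2⟩ := Nat.chineseRemainder hcop 1 0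
    have hcne : c ≠ 0 := by
      intro h
      rw [h] at hc1
      have h0 : 0 % q ^ b = 1 % q ^ b := hc1
      rw [Nat.zero_mod, Nat.mod_eq_of_lt hqb1] at h0
      omega
    refine ⟨y ^ c, ?_, ?_⟩
    · rw [map_pow, hy]
      have hoq : orderOf xb ∣ q ^ b := ha ▸ haleb
      have hmod : c ≡ 1 [MOD orderOf xb] := hc1.of_dvd hoq
      calc xb ^ c = xb ^ 1 := pow_eq_pow_iff_modEq.mpr hmod
        _ = xb := pow_one xb
    · rw [map_pow, ← hz]
      have horder : orderOf (z ^ c) = n / Nat.gcd n c := orderOf_pow' z hcne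
      have hmdvdn : m ∣ n := ⟨q ^ b, by rw [← hmul]; ring⟩
      have hmdvd : m ∣ Nat.gcd n c :=
        Nat.dvd_gcd hmdvdn ((Nat.modEq_zero_iff_dvd).mp hc2)
      have hgdvd : Nat.gcd n c ∣ n := Nat.gcd_dvd_left n c
      have hgpos : 0 < Nat.gcd n c := Nat.gcd_pos_of_pos_left c hnpos
      have hndm : n / m = q ^ b := by
        rw [← hmul]
        rw [mul_comm]
        exact Nat.mul_div_cancel_left _ hmpos
      have hdvdqb : n / Nat.gcd n c ∣ q ^ b := by
        rw [← hndm]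
        refine ⟨Nat.gcd n c / m, ?_⟩
        rw [Nat.div_mul_div_comm hgdvd hmdvd, mul_comm n (Nat.gcd n c),
          Nat.mul_div_mul_left _ _ hgpos]
      obtain ⟨b', _, hb'⟩ := (Nat.dvd_prime_pow hq).mp (horder ▸ hdvdqb)
      exact ⟨b', by rw [horder] at hb' ⊢; exact hb'⟩
  have hdir : Directed (· ⊇ ·) Z := by
    intro N₁ N₂
    haveI := N₁.2.1
    haveI := N₂.2.1
    refine ⟨⟨N₁.1 ⊓ N₂.1, Subgroup.normal_inf_normal _ _, ?_, le_trans inf_le_left N₁.2.2.2⟩,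
      ?_, ?_⟩
    · rw [Subgroup.coe_inf]
      exact N₁.2.2.1.inter N₂.2.2.1
    · intro x hx
      obtain ⟨h1, b, hb⟩ := hx
      refine ⟨h1, ?_⟩
      have := orderOf_quot_dvd (N₁.1 ⊓ N₂.1) N₁.1 inf_le_left x
      rw [hb] at this
      obtain ⟨b', _, hb'⟩ := (Nat.dvd_prime_pow hq).mp this
      exact ⟨b', hb'⟩
    · intro x hx
      obtain ⟨h1, b, hb⟩ := hx
      refine ⟨h1, ?_⟩
      have := orderOf_quot_dvd (N₁.1 ⊓ N₂.1) N₂.1 inf_le_right x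
      rw [hb] at this
      obtain ⟨b', _, hb'⟩ := (Nat.dvd_prime_pow hq).mp this
      exact ⟨b', hb'⟩
  obtain ⟨x, hx⟩ := IsCompact.nonempty_iInter_of_directed_nonempty_isCompact_isClosed Z hdir hZne
    (fun N => (hZclosed N).isCompact) hZclosed
  have hxN : ∀ N : ι, x ∈ Z N := by
    intro N
    exact Set.mem_iInter.mp hx N
  have hxM := hxN ⟨M, inferInstance, hM, le_rfl⟩
  refine ⟨x, hxM.1, ?_⟩
  ext p
  simp only [primesOf, Set.mem_setOf_eq, Set.mem_singleton_iff]
  constructor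
  · rintro ⟨hp, N', hN'n, hN'o, hdvd⟩
    haveI := hN'n
    have hdvd' : p ∣ orderOf (QuotientGroup.mk' N' x) := hdvd
    set Ni : ι := ⟨N' ⊓ M, Subgroup.normal_inf_normal _ _,
      by rw [Subgroup.coe_inf]; exact hN'o.inter hM, inf_le_right⟩
    obtain ⟨-, b, hb⟩ := hxN Ni
    have h1 : orderOf (QuotientGroup.mk' N' x) ∣ q ^ b := by
      rw [← hb]
      exact orderOf_quot_dvd (N' ⊓ M) N' inf_le_left x
    exact (Nat.prime_dvd_prime_iff_eq hp hq).mp (hp.dvd_of_dvd_pow (hdvd'.trans h1))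
  · rintro rfl
    refine ⟨hq, M, inferInstance, hM, ?_⟩
    show p ∣ orderOf (QuotientGroup.mk' M x)
    rw [hxM.1, ha]
    exact dvd_pow_self p (by omega)

end Profinite2

section Main
variable {G : Type*} [Group G] [TopologicalSpace G]

lemma primesOf_conj (g x : G) : primesOf (g * x * g⁻¹) = primesOf x := by
  ext p
  simp only [primesOf, Set.mem_setOf_eq]
  have key : ∀ (N : Subgroup G) (hN : N.Normal),
      orderOf (QuotientGroup.mk' N (g * x * g⁻¹)) = orderOf (QuotientGroup.mk' N x) := by
    intro N hN
    have : QuotientGroup.mk' N (g * x * g⁻¹) =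
        (QuotientGroup.mk' N g) * (QuotientGroup.mk' N x) * (QuotientGroup.mk' N g)⁻¹ := by
      simp [map_mul, map_inv]
    rw [this, orderOf_conj']
  constructor
  · rintro ⟨hp, N, hN, hNo, hdvd⟩
    refine ⟨hp, N, hN, hNo, ?_⟩
    have hdvd' : p ∣ orderOf (QuotientGroup.mk' N (g * x * g⁻¹)) := hdvd
    show p ∣ orderOf (QuotientGroup.mk' N x)
    rwa [key N hN] at hdvd'
  · rintro ⟨hp, N, hN, hNo, hdvd⟩
    refine ⟨hp, N, hN, hNo, ?_⟩
    have hdvd' : p ∣ orderOf (QuotientGroup.mk' N x) := hdvd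
    show p ∣ orderOf (QuotientGroup.mk' N (g * x * g⁻¹))
    rwa [key N hN]

lemma uniform_conj (k : ℕ) (g u : G) (hu : IsUniformCommutator k u) :
    IsUniformCommutator k (g * u * g⁻¹) := by
  obtain ⟨x, hx, rfl⟩ := hu
  refine ⟨fun i => g * x i * g⁻¹, fun i j => by rw [primesOf_conj, primesOf_conj]; exact hx i j, ?_⟩
  have h1 := lnc_map (MulAut.conj g).toMonoidHom (List.ofFn x)
  rw [List.map_ofFn] at h1
  have h2 : ⇑(MulAut.conj g).toMonoidHom ∘ x = fun i => g * x i * g⁻¹ := by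
    funext i; simp [MulAut.conj_apply]
  rw [h2] at h1
  rw [← h1]
  simp [MulAut.conj_apply]

lemma closureU_normal (k : ℕ) :
    (Subgroup.closure {g : G | IsUniformCommutator k g}).Normal := by
  constructor
  intro n hn g
  have himg : ⇑(MulAut.conj g).toMonoidHom '' {u : G | IsUniformCommutator k u} ⊆
      {u : G | IsUniformCommutator k u} := by
    rintro _ ⟨u, hu, rfl⟩
    simpa [MulAut.conj_apply] using uniform_conj k g u hu
  have hmem := Subgroup.mem_map_of_mem (MulAut.conj g).toMonoidHom hn
  rw [MonoidHom.map_closure] at hmem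
  have hle := Subgroup.closure_mono himg
  simpa [MulAut.conj_apply] using hle hmem

end Main

theorem stmt5 {G : Type*} [Group G] [TopologicalSpace G] [IsTopologicalGroup G]
    [CompactSpace G] [T2Space G] [TotallyDisconnectedSpace G]
    (k : ℕ) (hk : 1 ≤ k) :
    (Subgroup.closure {g : G | IsUniformCommutator k g}).topologicalClosure =
      (Subgroup.lowerCentralSeries (⊤ : Subgroup G) (k - 1)).topologicalClosure := by
  set U : Set G := {g : G | IsUniformCommutator k g} with hU
  set H₀ : Subgroup G := Subgroup.closure U with hH₀
  haveI hH₀norm : H₀.Normal := closureU_normal k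
  apply le_antisymm
  · -- easy inclusion
    refine Subgroup.topologicalClosure_minimal _ ?_ (Subgroup.isClosed_topologicalClosure _)
    refine le_trans (Subgroup.closure_le _ |>.mpr ?_) (Subgroup.le_topologicalClosure _)
    intro u hu
    obtain ⟨x, -, rfl⟩ := hu
    obtain ⟨k', rfl⟩ : ∃ k', k = k' + 1 := ⟨k - 1, by omega⟩
    rw [List.ofFn_succ]
    have := lnc_mem_lowerCentralSeries (x 0) (List.ofFn fun i : Fin k' => x i.succ)
    rw [List.length_ofFn] at this
    simpa using this
  · -- hard inclusion
    refine Subgroup.topologicalClosure_minimal _ ?_ (Subgroup.isClosed_topologicalClosure _)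
    intro g hg
    have hgoal : g ∈ _root_.closure (H₀ : Set G) := by
      rw [mem_closure_iff]
      intro V hVopen hgV
      -- find an open normal subgroup inside g⁻¹ • V
      have hWopen : IsOpen (g⁻¹ • V) := hVopen.smul g⁻¹
      have h1W : (1 : G) ∈ g⁻¹ • V := ⟨g, hgV, by simp⟩
      obtain ⟨C, hCclopen, h1C, hCW⟩ := compact_exists_isClopen_in_isOpen hWopen h1W
      obtain ⟨Hn, hHnC⟩ :=
        IsTopologicalGroup.exist_openNormalSubgroup_sub_clopen_nhds_of_one hCclopen h1C
      set N : Subgroup G := Hn.toSubgroup with hN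
      have hNopen : IsOpen (N : Set G) := Hn.toOpenSubgroup.isOpen
      have hNsub : (N : Set G) ⊆ g⁻¹ • V := fun y hy => hCW (hHnC hy)
      set M : Subgroup G := N ⊔ H₀ with hM
      haveI : M.Normal := Subgroup.sup_normal N H₀
      have hMopen : IsOpen (M : Set G) := Subgroup.isOpen_mono le_sup_left hNopen
      haveI : Finite (G ⧸ M) := finiteQuot M hMopen
      -- the finite quotient has trivial gamma_{k-1}
      have Hyp : ∀ q : ℕ, q.Prime → ∀ xq : Fin k → G ⧸ M, (∀ i, xq i ≠ 1) →
          (∀ i, ∃ a, orderOf (xq i) = q ^ a) → lnc (List.ofFn xq) = 1 := by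
        intro q hq xq hne hord
        have hlift : ∀ i, ∃ x : G, QuotientGroup.mk' M x = xq i ∧ primesOf x = {q} := by
          intro i
          obtain ⟨a, ha⟩ := hord i
          exact lift_qelem M hMopen q hq (xq i) (hne i) a ha
        choose xs hxs hprimes using hlift
        have huc : lnc (List.ofFn xs) ∈ U := by
          exact ⟨xs, fun i j => by rw [hprimes i, hprimes j], rfl⟩
        have hmem : lnc (List.ofFn xs) ∈ M :=
          Subgroup.mem_sup_right (Subgroup.subset_closure huc)
        have : lnc (List.ofFn xq) = QuotientGroup.mk' M (lnc (List.ofFn xs)) := by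
          rw [lnc_map, List.map_ofFn, show ⇑(QuotientGroup.mk' M) ∘ xs = xq from funext hxs]
        rw [this, QuotientGroup.mk'_apply, QuotientGroup.eq_one_iff]
        exact hmem
      have hbot : Subgroup.lowerCentralSeries (⊤ : Subgroup (G ⧸ M)) (k - 1) = ⊥ := finiteThm k hk Hyp
      -- g lies in M
      have hgM : g ∈ M := by
        have h1 : QuotientGroup.mk' M g ∈
            Subgroup.map (QuotientGroup.mk' M) (Subgroup.lowerCentralSeries (⊤ : Subgroup G) (k - 1)) :=
          Subgroup.mem_map_of_mem _ hg
        have h2 := Subgroup.lowerCentralSeries.map (QuotientGroup.mk' M) (k - 1) h1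
        rw [hbot] at h2
        have h3 : QuotientGroup.mk' M g = 1 := h2
        rwa [QuotientGroup.mk'_apply, QuotientGroup.eq_one_iff] at h3
      -- decompose g = n * h
      have hgNH : g ∈ (N : Set G) * (H₀ : Set G) := by
        rw [← Subgroup.mul_normal N H₀]
        exact_mod_cast hgM
      obtain ⟨n, hn, h, hh, rfl⟩ := hgNH
      refine ⟨h, ?_, hh⟩
      have hw : h⁻¹ * n⁻¹ * h ∈ N := by
        have := Hn.isNormal'.conj_mem n⁻¹ (Subgroup.inv_mem _ hn) h⁻¹
        exact (by simpa using this : h⁻¹ * n⁻¹ * h ∈ Hn.toOpenSubgroup)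
      have hwV : h⁻¹ * n⁻¹ * h ∈ ((n * h)⁻¹ • V : Set G) := hNsub hw
      obtain ⟨v, hv, hveq⟩ := Set.mem_smul_set.mp hwV
      have hveq' : (n * h)⁻¹ * v = h⁻¹ * n⁻¹ * h := by simpa [smul_eq_mul] using hveq
      have hvh : v = h := by
        have h2 : v = (n * h) * (h⁻¹ * n⁻¹ * h) := by rw [← hveq']; group
        rw [h2]; group
      exact hvh ▸ hv
    exact hgoal
end

section
/- Let φ be a coprime automorphism of a pronilpotent group G and let k be a positive integer. Then the set of elements of the form [g,φ] = g⁻¹·φ(g) with g ∈ G coincides with the set of elements of the form [g,_k φ] with g ∈ G, where [g,_1 φ] = [g,φ] and [g,_{j+1} φ] = [[g,_j φ], φ]. -/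
def nilpQuot {G : Type*} [Group G] (N : Subgroup G) [N.Normal] : Prop :=
  Group.IsNilpotent (G ⧸ N)

/-- A topological group is pronilpotent if all its quotients by open normal
subgroups are nilpotent. -/
def IsPronilpotent (G : Type*) [Group G] [TopologicalSpace G] : Prop :=
  ∀ (N : Subgroup G) (hN : N.Normal), IsOpen (N : Set G) → @nilpQuot G _ N hN

/-- `engel g a n = [g, a, a, …, a]` (`n` copies of `a`). -/
def engel {G : Type*} [Group G] (g a : G) : ℕ → G
  | 0 => g
  | n + 1 => pcomm (engel g a n) a


set_option linter.unusedSectionVars false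
set_option maxHeartbeats 1000000

private lemma mulaut_pow_succ_apply {G : Type*} [Group G] (α : MulAut G) (i : ℕ) (x : G) :
    (α ^ (i + 1)) x = (α ^ i) (α x) := by
  rw [pow_succ]; rfl

private lemma mulaut_pow_succ_apply' {G : Type*} [Group G] (α : MulAut G) (i : ℕ) (x : G) :
    (α ^ (i + 1)) x = α ((α ^ i) x) := by
  rw [pow_succ']; rfl

section Abelian

variable {H : Type*} [CommGroup H] [Finite H]

private def trc (α : MulAut H) (n : ℕ) (x : H) : H := ∏ i ∈ Finset.range n, (α ^ i) x

private def fhom (α : MulAut H) : H →* H where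
  toFun x := x⁻¹ * α x
  map_one' := by simp
  map_mul' x y := by
    simp only [mul_inv_rev, map_mul]
    simp [mul_comm, mul_left_comm, mul_assoc]

private lemma fhom_apply (α : MulAut H) (x : H) : fhom α x = x⁻¹ * α x := rfl

private lemma trc_mul (α : MulAut H) (n : ℕ) (x y : H) :
    trc α n (x * y) = trc α n x * trc α n y := by
  simp [trc, map_mul, Finset.prod_mul_distrib]

private lemma trc_inv (α : MulAut H) (n : ℕ) (x : H) : trc α n x⁻¹ = (trc α n x)⁻¹ := by
  simp [trc]

private lemma trc_shift (α : MulAut H) (n : ℕ) (h1 : ∀ x, (α ^ n) x = x) (x : H) :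
    ∏ i ∈ Finset.range n, (α ^ (i + 1)) x = trc α n x := by
  have h2 := Finset.prod_range_succ (fun i => (α ^ i) x) n
  have h3 := Finset.prod_range_succ' (fun i => (α ^ i) x) n
  simp only [h1, pow_zero, MulAut.one_apply] at h2 h3
  have : (∏ i ∈ Finset.range n, (α ^ (i + 1)) x) * x = trc α n x * x := by
    rw [trc, ← h2, h3]
  exact mul_right_cancel this

private lemma trc_fix (α : MulAut H) (n : ℕ) (h1 : ∀ x, (α ^ n) x = x) (x : H) :
    α (trc α n x) = trc α n x := by
  rw [trc, map_prod]
  rw [show (∏ i ∈ Finset.range n, α ((α ^ i) x)) = ∏ i ∈ Finset.range n, (α ^ (i + 1)) x by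
    refine Finset.prod_congr rfl fun i _ => ?_
    rw [mulaut_pow_succ_apply']]
  exact trc_shift α n h1 x

private lemma trc_alpha (α : MulAut H) (n : ℕ) (h1 : ∀ x, (α ^ n) x = x) (x : H) :
    trc α n (α x) = trc α n x := by
  rw [trc]
  rw [show (∏ i ∈ Finset.range n, (α ^ i) (α x)) = ∏ i ∈ Finset.range n, (α ^ (i + 1)) x by
    refine Finset.prod_congr rfl fun i _ => ?_
    rw [mulaut_pow_succ_apply]]
  exact trc_shift α n h1 x

private lemma trc_fco (α : MulAut H) (n : ℕ) (h1 : ∀ x, (α ^ n) x = x) (x : H) :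
    trc α n (x⁻¹ * α x) = 1 := by
  rw [trc_mul, trc_inv, trc_alpha α n h1, inv_mul_cancel]

private lemma trc_of_fixed (α : MulAut H) (n : ℕ) {c : H} (hc : α c = c) :
    trc α n c = c ^ n := by
  have hfix : ∀ i, (α ^ i) c = c := by
    intro i
    induction i with
    | zero => simp
    | succ i ih => rw [mulaut_pow_succ_apply', ih, hc]
  simp [trc, hfix]

private lemma sub_mem_range (α : MulAut H) : ∀ (i : ℕ) (x : H),
    x⁻¹ * (α ^ i) x ∈ (fhom α).range := by
  intro i
  induction i with
  | zero => intro x; simpa using one_mem (fhom α).range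
  | succ i ih =>
    intro x
    have : x⁻¹ * (α ^ (i + 1)) x = (x⁻¹ * α x) * ((α x)⁻¹ * (α ^ i) (α x)) := by
      rw [mulaut_pow_succ_apply]; group
    rw [this]
    exact mul_mem ⟨x, rfl⟩ (ih (α x))

private lemma abDecomp (α : MulAut H) (n : ℕ) (h1 : ∀ x, (α ^ n) x = x)
    (hcop : Nat.Coprime n (Nat.card H)) (g : H) :
    ∃ c h : H, α c = c ∧ g = c * (h⁻¹ * α h) := by
  obtain ⟨x, hx⟩ : ∃ x : H, x ^ n = g :=
    ⟨(powCoprime hcop.symm).symm g, (powCoprime hcop.symm).apply_symm_apply g⟩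
  have hmem : x⁻¹ ^ n * trc α n x ∈ (fhom α).range := by
    have heq : x⁻¹ ^ n * trc α n x = ∏ i ∈ Finset.range n, (x⁻¹ * (α ^ i) x) := by
      rw [Finset.prod_mul_distrib, Finset.prod_const, Finset.card_range, trc]
    rw [heq]
    exact prod_mem fun i _ => sub_mem_range α i x
  obtain ⟨h, hh⟩ := inv_mem hmem
  refine ⟨trc α n x, h, trc_fix α n h1 x, ?_⟩
  rw [fhom_apply] at hh
  rw [hh, mul_inv_rev, mul_inv_cancel_left, inv_pow, inv_inv, hx]

private lemma abKer (α : MulAut H) (n : ℕ) (h1 : ∀ x, (α ^ n) x = x)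
    (hcop : Nat.Coprime n (Nat.card H)) (z : H) (hz : trc α n z = 1) :
    ∃ h : H, z = h⁻¹ * α h := by
  obtain ⟨c, h, hc, hdec⟩ := abDecomp α n h1 hcop z
  have h2 : trc α n z = c ^ n := by
    rw [hdec, trc_mul, trc_of_fixed α n hc, trc_fco α n h1 h, mul_one]
  have hcn : c ^ n = 1 := by rw [← h2, hz]
  have hdvd : orderOf c ∣ Nat.gcd n (Nat.card H) :=
    Nat.dvd_gcd (orderOf_dvd_of_pow_eq_one hcn) (orderOf_dvd_natCard c)
  rw [hcop] at hdvd
  have : c = 1 := orderOf_eq_one_iff.mp (Nat.dvd_one.mp hdvd)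
  exact ⟨h, by rw [hdec, this, one_mul]⟩

end Abelian


section Part2

private lemma aut_mem_center {G : Type*} [Group G] (α : MulAut G) {x : G}
    (hx : x ∈ Subgroup.center G) : α x ∈ Subgroup.center G := by
  have hx' := Subgroup.mem_center_iff.mp hx
  refine Subgroup.mem_center_iff.mpr fun g => ?_
  calc g * α x = α (α.symm g * x) := by simp
  _ = α (x * α.symm g) := by rw [hx' (α.symm g)]
  _ = α x * g := by simp

private def centerAut {G : Type*} [Group G] (α : MulAut G) : MulAut ↥(Subgroup.center G) where
  toFun x := ⟨α ↑x, aut_mem_center α x.2⟩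
  invFun x := ⟨α.symm ↑x, aut_mem_center α.symm x.2⟩
  left_inv x := by ext; simp
  right_inv x := by ext; simp
  map_mul' x y := by ext; simp

private lemma centerAut_coe {G : Type*} [Group G] (α : MulAut G)
    (x : ↥(Subgroup.center G)) : (centerAut α x : G) = α ↑x := rfl

private lemma centerAut_coe_pow {G : Type*} [Group G] (α : MulAut G) (i : ℕ)
    (x : ↥(Subgroup.center G)) : (((centerAut α) ^ i) x : G) = (α ^ i) ↑x := by
  induction i generalizing x with
  | zero => simp
  | succ i ih =>
    rw [mulaut_pow_succ_apply, mulaut_pow_succ_apply, ih (centerAut α x), centerAut_coe]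

private lemma map_center_eq {G : Type*} [Group G] (α : MulAut G) :
    (Subgroup.center G).map (α : G →* G) = Subgroup.center G := by
  apply le_antisymm
  · rintro _ ⟨x, hx, rfl⟩
    exact aut_mem_center α hx
  · intro y hy
    exact ⟨α.symm y, aut_mem_center α.symm hy, α.apply_symm_apply y⟩

private def quotAut {G : Type*} [Group G] (α : MulAut G) :
    MulAut (G ⧸ Subgroup.center G) :=
  QuotientGroup.congr (Subgroup.center G) (Subgroup.center G) α (map_center_eq α)

private lemma quotAut_mk {G : Type*} [Group G] (α : MulAut G) (x : G) :
    quotAut α (QuotientGroup.mk x) = QuotientGroup.mk (α x) := rfl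

private lemma quotAut_pow_mk {G : Type*} [Group G] (α : MulAut G) (i : ℕ) (x : G) :
    ((quotAut α) ^ i) (QuotientGroup.mk x) = QuotientGroup.mk ((α ^ i) x) := by
  induction i generalizing x with
  | zero => simp
  | succ i ih =>
    rw [mulaut_pow_succ_apply, mulaut_pow_succ_apply, quotAut_mk, ih (α x)]

private lemma center_nontrivial_of_nilpotent {G : Type*} [Group G] [Finite G]
    [Group.IsNilpotent G] [Nontrivial G] : Nontrivial ↥(Subgroup.center G) := by
  rcases subsingleton_or_nontrivial ↥(Subgroup.center G) with hs | h
  · exfalso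
    have hbot : Subgroup.center G = ⊥ := Subgroup.eq_bot_of_subsingleton _
    have hinj : Function.Injective (QuotientGroup.mk' (Subgroup.center G)) := by
      rw [← MonoidHom.ker_eq_bot_iff, QuotientGroup.ker_mk']
      exact hbot
    let e : G ≃* G ⧸ Subgroup.center G :=
      MulEquiv.ofBijective _ ⟨hinj, QuotientGroup.mk'_surjective _⟩
    have h1 := nilpotencyClass_le_of_surjective (e.symm : G ⧸ Subgroup.center G →* G)
      e.symm.surjective
    have h2 := nilpotencyClass_eq_quotient_center_plus_one (hH := ‹Group.IsNilpotent G›)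
    rw [h2] at h1
    omega
  · exact h

universe u

open scoped IsMulCommutative in
private lemma nilpDecomp : ∀ (k : ℕ) (G : Type u) [Group G] [Finite G] [Group.IsNilpotent G]
    (α : MulAut G) (n : ℕ), Nat.card G ≤ k → 0 < n → (∀ x, (α ^ n) x = x) →
    Nat.Coprime n (Nat.card G) → ∀ g : G, ∃ c h : G, α c = c ∧ g = c * (h⁻¹ * α h) := by
  intro k
  induction k with
  | zero =>
    intro G _ _ _ α n hcard
    exact absurd hcard (by have := Nat.card_pos (α := G); omega)
  | succ k ih =>
    intro G _ _ _ α n hcard hn h1 hcop g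
    by_cases hab : ∀ x y : G, x * y = y * x
    · letI : CommGroup G := { ‹Group G› with mul_comm := hab }
      exact abDecomp α n h1 hcop g
    · haveI : Nontrivial G := by
        rcases not_forall.mp hab with ⟨x, hx⟩
        rcases not_forall.mp hx with ⟨y, hxy⟩
        exact ⟨⟨x * y, y * x, hxy⟩⟩
      set Z := Subgroup.center G with hZdef
      haveI hZnt : Nontrivial ↥Z := center_nontrivial_of_nilpotent
      -- abelian data on the center
      have hZcard : Nat.card ↥Z ∣ Nat.card G := Subgroup.card_subgroup_dvd_card Z
      have hcopZ : Nat.Coprime n (Nat.card ↥Z) := Nat.Coprime.coprime_dvd_right hZcard hcop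
      have h1Z : ∀ x : ↥Z, ((centerAut α) ^ n) x = x := by
        intro x
        ext
        rw [centerAut_coe_pow, h1]
      -- quotient data
      have heq : Nat.card G = Nat.card (G ⧸ Z) * Nat.card ↥Z :=
        Subgroup.card_eq_card_quotient_mul_card_subgroup Z
      have hq2 : 2 ≤ Nat.card ↥Z := Finite.one_lt_card_iff_nontrivial.mpr hZnt
      have hqpos : 0 < Nat.card (G ⧸ Z) := Nat.card_pos
      have hcardlt : Nat.card (G ⧸ Z) ≤ k := by
        have hmul : Nat.card (G ⧸ Z) * 2 ≤ Nat.card (G ⧸ Z) * Nat.card ↥Z :=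
          Nat.mul_le_mul_left _ hq2
        rw [← heq] at hmul
        have hG2 : 2 ≤ Nat.card G := Finite.one_lt_card_iff_nontrivial.mpr ‹Nontrivial G›
        omega
      have hdvdq : Nat.card (G ⧸ Z) ∣ Nat.card G := ⟨Nat.card ↥Z, heq⟩
      have hcopQ : Nat.Coprime n (Nat.card (G ⧸ Z)) := Nat.Coprime.coprime_dvd_right hdvdq hcop
      have h1Q : ∀ q : G ⧸ Z, ((quotAut α) ^ n) q = q := by
        intro q
        induction q using QuotientGroup.induction_on with
        | H x => rw [quotAut_pow_mk, h1]
      obtain ⟨cb, hb, hcb, heqb⟩ := ih (G ⧸ Z) (quotAut α) n hcardlt hn h1Q hcopQ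
        (QuotientGroup.mk g)
      obtain ⟨c₀, rfl⟩ := QuotientGroup.mk_surjective cb
      obtain ⟨h₀, rfl⟩ := QuotientGroup.mk_surjective hb
      -- fixedness of c₀ modulo the center
      have hz : c₀⁻¹ * α c₀ ∈ Z := by
        rw [quotAut_mk] at hcb
        exact QuotientGroup.eq.mp hcb.symm
      set ζ : ↥Z := ⟨c₀⁻¹ * α c₀, hz⟩ with hζdef
      set β : MulAut ↥Z := centerAut α with hβdef
      -- the product formula
      have hprod : ∀ i : ℕ, (α ^ i) c₀ = c₀ * ((∏ j ∈ Finset.range i, (β ^ j) ζ : ↥Z) : G) := by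
        intro i
        induction i with
        | zero => simp
        | succ i ihp =>
          rw [mulaut_pow_succ_apply', ihp, map_mul]
          have hstep : (∏ j ∈ Finset.range (i + 1), (β ^ j) ζ : ↥Z)
              = β (∏ j ∈ Finset.range i, (β ^ j) ζ) * ζ := by
            rw [Finset.prod_range_succ' (fun j => (β ^ j) ζ) i, map_prod]
            simp only [pow_zero, MulAut.one_apply]
            congr 1
            refine Finset.prod_congr rfl fun j _ => ?_
            rw [mulaut_pow_succ_apply']
          rw [hstep]
          have hcoe : ((β (∏ j ∈ Finset.range i, (β ^ j) ζ) * ζ : ↥Z) : G)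
              = α ↑(∏ j ∈ Finset.range i, (β ^ j) ζ) * (c₀⁻¹ * α c₀) := rfl
          rw [hcoe]
          have hcommP := Subgroup.mem_center_iff.mp
            (aut_mem_center α (∏ j ∈ Finset.range i, (β ^ j) ζ).2)
          rw [← hcommP (c₀⁻¹ * α c₀)]
          group
      have htrc1 : trc β n ζ = 1 := by
        have hpn := hprod n
        rw [h1] at hpn
        have h2 : ((∏ j ∈ Finset.range n, (β ^ j) ζ : ↥Z) : G) = 1 :=
          mul_eq_left.mp hpn.symm
        exact OneMemClass.coe_eq_one.mp h2
      obtain ⟨h₂, hζeq⟩ := abKer β n h1Z hcopZ ζ htrc1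
      set z₀ : G := (h₂ : G) with hz₀def
      have hz₀mem : z₀ ∈ Z := h₂.2
      have hz₀c := Subgroup.mem_center_iff.mp hz₀mem
      -- the fixed correction
      set c : G := c₀ * z₀⁻¹ with hcdef
      have hαz₀ : α z₀ = z₀ * ↑ζ := by
        have hcoeζ : (ζ : G) = z₀⁻¹ * α z₀ := by rw [hζeq]; rfl
        rw [hcoeζ, mul_inv_cancel_left]
      have hαc₀ : α c₀ = c₀ * ↑ζ := by
        show α c₀ = c₀ * (c₀⁻¹ * α c₀)
        rw [mul_inv_cancel_left]
      have hαc : α c = c := by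
        rw [hcdef, map_mul, map_inv, hαz₀, hαc₀, mul_inv_rev]
        group
      -- the central discrepancy
      have hmkeq : (QuotientGroup.mk (c₀ * (h₀⁻¹ * α h₀)) : G ⧸ Z) = QuotientGroup.mk g := by
        rw [heqb, quotAut_mk]
        rfl
      have hz₁mem : (c₀ * (h₀⁻¹ * α h₀))⁻¹ * g ∈ Z := QuotientGroup.eq.mp hmkeq
      set z₁ : G := (c₀ * (h₀⁻¹ * α h₀))⁻¹ * g with hz₁def
      have hgw : g = c₀ * (h₀⁻¹ * α h₀) * z₁ := by rw [hz₁def, mul_inv_cancel_left]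
      -- decompose the total central part z₀ * z₁
      set ζ₂ : ↥Z := ⟨z₀, hz₀mem⟩ * ⟨z₁, hz₁mem⟩ with hζ₂def
      obtain ⟨cz, w₂, hcz, hζ₂eq⟩ := abDecomp β n h1Z hcopZ ζ₂
      have hczG : α (cz : G) = (cz : G) := congrArg Subtype.val hcz
      have hw₂mem : (w₂ : G) ∈ Z := w₂.2
      have hαw₂mem : α (w₂ : G) ∈ Z := aut_mem_center α hw₂mem
      have hczmem : (cz : G) ∈ Z := cz.2
      have hζ₂G : z₀ * z₁ = (cz : G) * ((w₂ : G)⁻¹ * α (w₂ : G)) := congrArg Subtype.val hζ₂eq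
      refine ⟨c * (cz : G), h₀ * (w₂ : G), ?_, ?_⟩
      · rw [map_mul, hαc, hczG]
      · -- g = (c * cz) * ((h₀ * w₂)⁻¹ * α (h₀ * w₂))
        have hcomm_cz := Subgroup.mem_center_iff.mp hczmem
        have hcomm_w₂ := Subgroup.mem_center_iff.mp hw₂mem
        have hcomm_αw₂ := Subgroup.mem_center_iff.mp hαw₂mem
        have hcomm_z₀ := hz₀c
        rw [hgw]
        have hc₀ : c₀ = c * z₀ := by rw [hcdef, inv_mul_cancel_right]
        rw [hc₀, map_mul, mul_inv_rev]
        -- goal: c * z₀ * (h₀⁻¹ * α h₀) * z₁ = c * cz * (w₂⁻¹ * h₀⁻¹ * (α h₀ * α w₂))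
        calc c * z₀ * (h₀⁻¹ * α h₀) * z₁
            = c * (h₀⁻¹ * α h₀) * (z₀ * z₁) := by
              rw [mul_assoc c z₀, ← hcomm_z₀ (h₀⁻¹ * α h₀)]
              group
          _ = c * (h₀⁻¹ * α h₀) * ((cz : G) * ((w₂ : G)⁻¹ * α (w₂ : G))) := by rw [hζ₂G]
          _ = c * (cz : G) * ((w₂ : G)⁻¹ * h₀⁻¹ * (α h₀ * α (w₂ : G))) := by
              have hw₂invmem : ((w₂ : G))⁻¹ ∈ Z := Z.inv_mem hw₂mem
              have swap : ∀ z : G, z ∈ Z → ∀ u v : G, u * z * v = u * v * z := by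
                intro z hzz u v
                have hc := Subgroup.mem_center_iff.mp hzz
                rw [mul_assoc, ← hc v, ← mul_assoc]
              simp only [← mul_assoc]
              conv_rhs => rw [swap _ hw₂invmem (c * (cz : G)) h₀⁻¹]
              conv_rhs => rw [swap _ hw₂invmem (c * (cz : G) * h₀⁻¹) (α h₀)]
              conv_rhs => rw [swap _ hczmem c h₀⁻¹]
              conv_rhs => rw [swap _ hczmem (c * h₀⁻¹) (α h₀)]
        done

end Part2


private lemma finStep {Q : Type*} [Group Q] [Finite Q] (M : Subgroup Q)
    (hM : Group.IsNilpotent ↥M) (b : Q)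
    (hb : ∀ x : Q, x ∈ M ↔ b⁻¹ * x * b ∈ M)
    (hcop : Nat.Coprime (orderOf b) (Nat.card ↥M))
    {g : Q} (hg : g ∈ M) :
    ∃ h ∈ M, pcomm g b = pcomm (pcomm h b) b := by
  set α : MulAut ↥M :=
    { toFun := fun x => ⟨b⁻¹ * ↑x * b, (hb ↑x).mp x.2⟩
      invFun := fun x => ⟨b * ↑x * b⁻¹, by
        refine (hb (b * ↑x * b⁻¹)).mpr ?_
        have hxx : b⁻¹ * (b * ↑x * b⁻¹) * b = ↑x := by group
        rw [hxx]; exact x.2⟩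
      left_inv := fun x => by
        ext
        show b * (b⁻¹ * ↑x * b) * b⁻¹ = ↑x
        group
      right_inv := fun x => by
        ext
        show b⁻¹ * (b * ↑x * b⁻¹) * b = ↑x
        group
      map_mul' := fun x y => by
        ext
        show b⁻¹ * (↑x * ↑y) * b = (b⁻¹ * ↑x * b) * (b⁻¹ * ↑y * b)
        group } with hαdef
  have hαcoe : ∀ x : ↥M, (α x : Q) = b⁻¹ * ↑x * b := fun x => rfl
  have hcoe_pow : ∀ (i : ℕ) (x : ↥M), ((α ^ i) x : Q) = (b ^ i)⁻¹ * ↑x * b ^ i := by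
    intro i
    induction i with
    | zero => intro x; simp
    | succ i ih =>
      intro x
      rw [mulaut_pow_succ_apply, ih (α x), hαcoe, pow_succ]
      group
  have hn : 0 < orderOf b := orderOf_pos b
  have h1 : ∀ x : ↥M, (α ^ orderOf b) x = x := by
    intro x
    ext
    rw [hcoe_pow, pow_orderOf_eq_one]
    group
  obtain ⟨c, h, hc, hgeq⟩ :=
    nilpDecomp (Nat.card ↥M) ↥M α (orderOf b) le_rfl hn h1 hcop ⟨g, hg⟩
  have hpcomm_coe : ∀ x : ↥M, pcomm (↑x) b = ↑(x⁻¹ * α x) := by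
    intro x
    show x.1⁻¹ * b⁻¹ * x.1 * b = x.1⁻¹ * (b⁻¹ * x.1 * b)
    group
  set u : ↥M := h⁻¹ * α h with hu
  refine ⟨↑h, h.2, ?_⟩
  have hcu : (c * u)⁻¹ * α (c * u) = u⁻¹ * α u := by
    rw [map_mul, hc, mul_inv_rev]
    group
  have hg' : g = ((c * u : ↥M) : Q) := by rw [← hgeq]
  have hRHS : pcomm (pcomm (↑h) b) b = ((u⁻¹ * α u : ↥M) : Q) := by
    rw [hpcomm_coe h, ← hu, hpcomm_coe u]
  rw [hg', hpcomm_coe (c * u), hcu, hRHS]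


private lemma exists_avoid {W : Type*} [Group W] [TopologicalSpace W] [IsTopologicalGroup W]
    [CompactSpace W] [T2Space W] [TotallyDisconnectedSpace W] {x : W} (hx : x ≠ 1) :
    ∃ U : Subgroup W, U.Normal ∧ IsOpen (U : Set W) ∧ x ∉ U := by
  have hopen : IsOpen ({x}ᶜ : Set W) := isOpen_compl_singleton
  have h1 : (1 : W) ∈ ({x}ᶜ : Set W) := by simpa using (Ne.symm hx)
  obtain ⟨C, hC, h1C, hCsub⟩ := compact_exists_isClopen_in_isOpen hopen h1
  obtain ⟨H, hH⟩ := IsTopologicalGroup.exist_openNormalSubgroup_sub_clopen_nhds_of_one hC h1C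
  refine ⟨H.toSubgroup, H.isNormal', H.isOpen, fun hmem => ?_⟩
  exact (hCsub (hH hmem)) rfl

theorem stmt6 {W : Type*} [Group W] [TopologicalSpace W] [IsTopologicalGroup W]
    [CompactSpace W] [T2Space W] [TotallyDisconnectedSpace W]
    (N : Subgroup W) (hNclosed : IsClosed (N : Set W))
    (hNpronilp : IsPronilpotent ↥N)
    (a : W) (ha : a ∈ Subgroup.normalizer (N : Set W))
    (hcoprime : primesOf a ∩ ⋃ g ∈ (N : Set W), primesOf g = ∅)
    (k : ℕ) (hk : 1 ≤ k) :
    {x : W | ∃ g ∈ N, x = pcomm g a} = {x : W | ∃ g ∈ N, x = engel g a k} := by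
  classical
  have hconj : ∀ w : W, w ∈ N ↔ a⁻¹ * w * a ∈ N := Subgroup.mem_normalizer_iff''.mp ha
  have hmemN : ∀ {w : W}, w ∈ N → pcomm w a ∈ N := by
    intro w hw
    have h1 : a⁻¹ * w * a ∈ N := (hconj w).mp hw
    have h2 : pcomm w a = w⁻¹ * (a⁻¹ * w * a) := by
      show w⁻¹ * a⁻¹ * w * a = w⁻¹ * (a⁻¹ * w * a)
      group
    rw [h2]
    exact N.mul_mem (N.inv_mem hw) h1
  haveI hNcs : CompactSpace ↥N := isCompact_iff_compactSpace.mp hNclosed.isCompact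
  -- the key step : every [g,a] is [[h,a],a]
  have key : ∀ g ∈ N, ∃ h ∈ N, pcomm g a = pcomm (pcomm h a) a := by
    intro g hg
    let ι := {U : Subgroup W // U.Normal ∧ IsOpen (U : Set W)}
    haveI : Nonempty ι := ⟨⟨⊤, inferInstance, by rw [Subgroup.coe_top]; exact isOpen_univ⟩⟩
    let F : ↥N → W := fun h => (pcomm (pcomm (↑h) a) a)⁻¹ * pcomm g a
    have hFcont : Continuous F := by
      have : F = fun h : ↥N =>
          ((((h : W)⁻¹ * a⁻¹ * ↑h * a)⁻¹ * a⁻¹ * ((h : W)⁻¹ * a⁻¹ * ↑h * a) * a)⁻¹ *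
            pcomm g a) := rfl
      rw [this]
      fun_prop
    let S : ι → Set ↥N := fun U => F ⁻¹' (U.1 : Set W)
    have hclosed : ∀ U : ι, IsClosed (S U) :=
      fun U => (U.1.isClosed_of_isOpen U.2.2).preimage hFcont
    have hnonempty : ∀ U : ι, (S U).Nonempty := by
      rintro ⟨U, hUn, hUo⟩
      haveI := hUn
      haveI : Finite (W ⧸ U) := U.quotient_finite_of_isOpen hUo
      set π := QuotientGroup.mk' U with hπdef
      set M : Subgroup (W ⧸ U) := N.map π with hMdef
      have hπpcomm : ∀ x y : W, π (pcomm x y) = pcomm (π x) (π y) := by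
        intro x y
        show π (x⁻¹ * y⁻¹ * x * y) = (π x)⁻¹ * (π y)⁻¹ * π x * π y
        rw [map_mul, map_mul, map_mul, map_inv, map_inv]
      -- nilpotency of M
      have hnilp : Group.IsNilpotent ↥M := by
        haveI hK : (U.subgroupOf N).Normal := inferInstance
        have hKopen : IsOpen ((U.subgroupOf N : Subgroup ↥N) : Set ↥N) := by
          have hset : ((U.subgroupOf N : Subgroup ↥N) : Set ↥N)
              = (Subtype.val : ↥N → W) ⁻¹' (U : Set W) := rfl
          rw [hset]
          exact hUo.preimage continuous_subtype_val
        haveI hq : Group.IsNilpotent (↥N ⧸ U.subgroupOf N) := hNpronilp (U.subgroupOf N) hK hKopen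
        let ψ : ↥N →* ↥M := (π.comp N.subtype).codRestrict M
          (fun x => Subgroup.mem_map.mpr ⟨↑x, x.2, rfl⟩)
        have hψker : U.subgroupOf N ≤ ψ.ker := by
          intro x hx
          have hx1 : π ↑x = 1 := (QuotientGroup.eq_one_iff _).mpr hx
          exact MonoidHom.mem_ker.mpr (Subtype.ext hx1)
        have hψ'surj : Function.Surjective (QuotientGroup.lift (U.subgroupOf N) ψ hψker) := by
          rintro ⟨q, hq⟩
          obtain ⟨w, hw, rfl⟩ := Subgroup.mem_map.mp hq
          exact ⟨QuotientGroup.mk ⟨w, hw⟩, Subtype.ext rfl⟩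
        exact nilpotent_of_surjective _ hψ'surj
      -- a normalizes M
      set b := π a with hbdef
      have hbM : ∀ x : W ⧸ U, x ∈ M ↔ b⁻¹ * x * b ∈ M := by
        intro x
        constructor
        · intro hx
          obtain ⟨w, hw, rfl⟩ := Subgroup.mem_map.mp hx
          refine Subgroup.mem_map.mpr ⟨a⁻¹ * w * a, (hconj w).mp hw, ?_⟩
          rw [map_mul, map_mul, map_inv]
        · intro hx
          obtain ⟨w, hw, hwx⟩ := Subgroup.mem_map.mp hx
          have hx' : x = π (a * w * a⁻¹) := by
            rw [map_mul, map_mul, map_inv, hwx, ← hbdef]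
            group
          have hmem : a * w * a⁻¹ ∈ N := by
            refine (hconj (a * w * a⁻¹)).mpr ?_
            have : a⁻¹ * (a * w * a⁻¹) * a = w := by group
            rw [this]; exact hw
          exact hx' ▸ Subgroup.mem_map.mpr ⟨_, hmem, rfl⟩
      -- coprimality
      have hcopM : Nat.Coprime (orderOf b) (Nat.card ↥M) := by
        by_contra hnc
        set d := Nat.gcd (orderOf b) (Nat.card ↥M) with hd
        have hd1 : d ≠ 1 := hnc
        set p := d.minFac with hp
        have hpp : p.Prime := Nat.minFac_prime hd1
        have hpb : p ∣ orderOf b := (Nat.minFac_dvd d).trans (Nat.gcd_dvd_left _ _)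
        have hpM : p ∣ Nat.card ↥M := (Nat.minFac_dvd d).trans (Nat.gcd_dvd_right _ _)
        haveI : Fact p.Prime := ⟨hpp⟩
        obtain ⟨m, hm⟩ := exists_prime_orderOf_dvd_card' (G := ↥M) p hpM
        obtain ⟨w, hw, hwm⟩ := Subgroup.mem_map.mp m.2
        have hordm : orderOf ((m : ↥M) : W ⧸ U) = p := by
          rw [← hm]
          exact orderOf_injective M.subtype Subtype.coe_injective m
        have hpa : p ∈ primesOf a := ⟨hpp, U, hUn, hUo, hpb⟩
        have hpw : p ∈ primesOf w := by
          refine ⟨hpp, U, hUn, hUo, ?_⟩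
          show p ∣ orderOf (QuotientGroup.mk' U w)
          rw [← hπdef, hwm, hordm]
        have hmem : p ∈ primesOf a ∩ ⋃ g ∈ (N : Set W), primesOf g :=
          ⟨hpa, Set.mem_biUnion hw hpw⟩
        rw [hcoprime] at hmem
        exact hmem
      obtain ⟨h, hh, heq⟩ := finStep M hnilp b hbM hcopM (Subgroup.mem_map.mpr ⟨g, hg, rfl⟩)
      obtain ⟨h₀, hh₀, rfl⟩ := Subgroup.mem_map.mp hh
      refine ⟨⟨h₀, hh₀⟩, ?_⟩
      show (pcomm (pcomm h₀ a) a)⁻¹ * pcomm g a ∈ U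
      have hπeq : π (pcomm (pcomm h₀ a) a) = π (pcomm g a) := by
        rw [hπpcomm, hπpcomm, hπpcomm]
        exact heq.symm
      refine (QuotientGroup.eq_one_iff _).mp ?_
      show π ((pcomm (pcomm h₀ a) a)⁻¹ * pcomm g a) = 1
      rw [map_mul, map_inv, hπeq, inv_mul_cancel]
    have hdir : Directed (· ⊇ ·) S := by
      rintro U V
      refine ⟨⟨U.1 ⊓ V.1, ?_, ?_⟩, ?_, ?_⟩
      · haveI := U.2.1; haveI := V.2.1; infer_instance
      · rw [Subgroup.coe_inf]; exact U.2.2.inter V.2.2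
      · intro h hh
        exact Set.mem_of_mem_of_subset hh (Set.preimage_mono (fun y hy => hy.1))
      · intro h hh
        exact Set.mem_of_mem_of_subset hh (Set.preimage_mono (fun y hy => hy.2))
    obtain ⟨h, hhall⟩ := IsCompact.nonempty_iInter_of_directed_nonempty_isCompact_isClosed
      S hdir hnonempty (fun U => (hclosed U).isCompact) hclosed
    have hFone : F h = 1 := by
      by_contra hne
      obtain ⟨U, hUn, hUo, hxU⟩ := exists_avoid hne
      exact hxU (Set.mem_iInter.mp hhall ⟨U, hUn, hUo⟩)
    refine ⟨↑h, h.2, ?_⟩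
    exact (inv_mul_eq_one.mp hFone).symm
  -- membership of engel and the induction
  have hengelN : ∀ (j : ℕ), ∀ g ∈ N, engel g a j ∈ N := by
    intro j
    induction j with
    | zero => intro g hg; exact hg
    | succ j ih =>
      intro g hg
      show pcomm (engel g a j) a ∈ N
      exact hmemN (ih g hg)
  have haux : ∀ k : ℕ, 1 ≤ k → ∀ g ∈ N, ∃ h ∈ N, pcomm g a = engel h a k := by
    intro k
    induction k with
    | zero => intro h; exact absurd h (by omega)
    | succ k ihk =>
      intro _ g hg
      by_cases hk0 : k = 0
      · subst hk0
        exact ⟨g, hg, rfl⟩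
      · have hk1 : 1 ≤ k := by omega
        obtain ⟨h₀, hh₀, hkey⟩ := key g hg
        obtain ⟨h₁, hh₁, hIH⟩ := ihk hk1 h₀ hh₀
        refine ⟨h₁, hh₁, ?_⟩
        rw [hkey]
        show pcomm (pcomm h₀ a) a = pcomm (engel h₁ a k) a
        rw [← hIH]
  ext x
  simp only [Set.mem_setOf_eq]
  constructor
  · rintro ⟨g, hg, rfl⟩
    exact haux k hk g hg
  · rintro ⟨g, hg, rfl⟩
    obtain ⟨k', rfl⟩ : ∃ k', k = k' + 1 := ⟨k - 1, by omega⟩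
    exact ⟨engel g a k', hengelN k' g hg, rfl⟩
end

section
/- Let k ≥ 1 and let G = ∏_{i ∈ I} S_i be a Cartesian (unrestricted direct) product of nonabelian finite simple groups S_i, with the product topology. If every uniform k-step commutator of G is an FC-element, then G is finite (equivalently, the index set I is finite). -/
/-- An element is an FC-element if its conjugacy class is finite. -/
def IsFCElement {G : Type*} [Group G] (x : G) : Prop :=
  {y : G | ∃ h : G, y = h⁻¹ * x * h}.Finite

/- ### Auxiliary lemmas -/

lemma pcomm_eq_one_iff {G : Type*} [Group G] (a b : G) :
    pcomm a b = 1 ↔ b * a = a * b := by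
  unfold pcomm
  constructor
  · intro h
    have := congrArg (fun z => b * a * z) h
    simpa [mul_assoc] using this.symm
  · intro h
    have : a⁻¹ * b⁻¹ * a * b = a⁻¹ * b⁻¹ * (a * b) := by group
    rw [this, ← h]
    group

lemma exists_noncomm {S : Type*} [Group S] [IsSimpleGroup S]
    (hna : ∃ a b : S, a * b ≠ b * a) {w : S} (hw : w ≠ 1) :
    ∃ s : S, w * s ≠ s * w := by
  by_contra hcon
  push_neg at hcon
  have hw' : w ∈ Subgroup.center S := Subgroup.mem_center_iff.mpr fun g => (hcon g).symm
  rcases (inferInstance : (Subgroup.center S).Normal).eq_bot_or_eq_top with h | h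
  · rw [h] at hw'; exact hw (Subgroup.mem_bot.mp hw')
  · obtain ⟨a, b, hab⟩ := hna
    have ha : a ∈ Subgroup.center S := h ▸ Subgroup.mem_top a
    exact hab (Subgroup.mem_center_iff.mp ha b).symm

lemma exists_conj_pcomm {S : Type*} [Group S] [IsSimpleGroup S]
    (hna : ∃ a b : S, a * b ≠ b * a) {t : S} (ht : t ≠ 1) {w : S} (hw : w ≠ 1) :
    ∃ h : S, pcomm w (h * t * h⁻¹) ≠ 1 := by
  by_contra hcon
  push_neg at hcon
  have hcent : ∀ h : S, (h * t * h⁻¹) * w = w * (h * t * h⁻¹) := by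
    intro h
    exact (pcomm_eq_one_iff _ _).mp (hcon h)
  have hle : Subgroup.normalClosure {t} ≤ Subgroup.centralizer {w} := by
    refine (Subgroup.closure_le _).mpr ?_
    intro x hx
    obtain ⟨t', ht', hconj⟩ := Group.mem_conjugatesOfSet_iff.mp hx
    rw [Set.mem_singleton_iff] at ht'
    rw [ht'] at hconj
    obtain ⟨c, hc⟩ := isConj_iff.mp hconj
    have hx' : x = c * t * c⁻¹ := hc.symm
    refine Subgroup.mem_centralizer_iff.mpr ?_
    intro z hz
    rw [Set.mem_singleton_iff] at hz
    subst hz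
    rw [hx']
    exact (hcent c).symm
  have hne : Subgroup.normalClosure {t} ≠ ⊥ := by
    intro hbot
    have : t ∈ Subgroup.normalClosure ({t} : Set S) :=
      Subgroup.subset_normalClosure rfl
    rw [hbot] at this
    exact ht (Subgroup.mem_bot.mp this)
  have htop : Subgroup.normalClosure ({t} : Set S) = ⊤ :=
    (Subgroup.normalClosure_normal.eq_bot_or_eq_top).resolve_left hne
  obtain ⟨s, hs⟩ := exists_noncomm hna hw
  have : s ∈ Subgroup.centralizer ({w} : Set S) := hle (htop ▸ Subgroup.mem_top s)
  exact hs (Subgroup.mem_centralizer_iff.mp this w rfl)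

/-- Sequence of pairs `(cₙ, uₙ)` with `uₙ` conjugate to `t`, `c₀ = u₀ = t`,
`cₙ₊₁ = pcomm cₙ uₙ₊₁` and `cₙ ≠ 1`. -/
noncomputable def seqCU {S : Type*} [Group S] [IsSimpleGroup S]
    (hna : ∃ a b : S, a * b ≠ b * a) (t : S) (ht : t ≠ 1) :
    ℕ → {p : S × S // (∃ h : S, p.2 = h * t * h⁻¹) ∧ p.1 ≠ 1}
  | 0 => ⟨(t, t), ⟨1, by group⟩, ht⟩
  | n + 1 =>
    let prev := seqCU hna t ht n
    let h := Classical.choose (exists_conj_pcomm hna ht prev.2.2)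
    ⟨(pcomm prev.1.1 (h * t * h⁻¹), h * t * h⁻¹), ⟨h, rfl⟩,
      Classical.choose_spec (exists_conj_pcomm hna ht prev.2.2)⟩

lemma seqCU_succ {S : Type*} [Group S] [IsSimpleGroup S]
    (hna : ∃ a b : S, a * b ≠ b * a) (t : S) (ht : t ≠ 1) (n : ℕ) :
    (seqCU hna t ht (n + 1)).1.1
      = pcomm (seqCU hna t ht n).1.1 (seqCU hna t ht (n + 1)).1.2 := rfl

lemma seqCU_foldl {S : Type*} [Group S] [IsSimpleGroup S]
    (hna : ∃ a b : S, a * b ≠ b * a) (t : S) (ht : t ≠ 1) (n : ℕ) :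
    List.foldl pcomm t (List.ofFn fun j : Fin n => (seqCU hna t ht (j + 1)).1.2)
      = (seqCU hna t ht n).1.1 := by
  induction n with
  | zero => simp [seqCU]
  | succ n ih =>
    rw [List.ofFn_succ', List.concat_eq_append, List.foldl_append]
    simp only [Fin.coe_castSucc, Fin.val_last, List.foldl_cons, List.foldl_nil]
    rw [ih, ← seqCU_succ]

lemma foldl_pcomm_apply {I : Type*} {S : I → Type*} [∀ i, Group (S i)]
    (a : ∀ i, S i) (l : List (∀ i, S i)) (i : I) :
    (List.foldl pcomm a l) i = List.foldl pcomm (a i) (l.map fun f => f i) := by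
  induction l generalizing a with
  | nil => rfl
  | cons b l ih => exact ih (pcomm a b)

lemma lnc_apply {I : Type*} {S : I → Type*} [∀ i, Group (S i)]
    (l : List (∀ i, S i)) (i : I) :
    lnc l i = lnc (l.map fun f => f i) := by
  cases l with
  | nil => rfl
  | cons a t => simpa [lnc] using foldl_pcomm_apply a t i

lemma primesOf_conj_s14 {G : Type*} [Group G] [TopologicalSpace G] (c x : G) :
    primesOf (c * x * c⁻¹) = primesOf x := by
  have key : ∀ (N : Subgroup G) (_ : N.Normal),
      orderOf (QuotientGroup.mk' N (c * x * c⁻¹)) = orderOf (QuotientGroup.mk' N x) := by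
    intro N hN
    rw [map_mul, map_mul, map_inv]
    have := orderOf_injective (MulAut.conj (QuotientGroup.mk' N c)).toMonoidHom
      (MulAut.conj (QuotientGroup.mk' N c)).injective (QuotientGroup.mk' N x)
    simpa [MulAut.conj_apply, mul_assoc] using this
  ext p
  simp only [primesOf, pDvdOrderInQuot, Set.mem_setOf_eq]
  constructor
  · rintro ⟨hp, N, hN, hopen, hdvd⟩
    exact ⟨hp, N, hN, hopen, by rwa [key N hN] at hdvd⟩
  · rintro ⟨hp, N, hN, hopen, hdvd⟩
    exact ⟨hp, N, hN, hopen, by rwa [key N hN]⟩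

theorem stmt14 {I : Type*} {S : I → Type*} [∀ i, Group (S i)] [∀ i, Finite (S i)]
    [∀ i, TopologicalSpace (S i)] [∀ i, DiscreteTopology (S i)]
    [∀ i, IsSimpleGroup (S i)]
    (hnonab : ∀ i, ∃ a b : S i, a * b ≠ b * a)
    (k : ℕ) (hk : 1 ≤ k)
    (hFC : ∀ g : (∀ i, S i), IsUniformCommutator k g → IsFCElement g) :
    Finite (∀ i, S i) := by
  classical
  obtain ⟨m, rfl⟩ : ∃ m, k = m + 1 := ⟨k - 1, by omega⟩
  choose a b hab using hnonab
  have ht : ∀ i, a i ≠ 1 := by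
    intro i h
    exact hab i (by rw [h, one_mul, mul_one])
  have hna : ∀ i, ∃ x y : S i, x * y ≠ y * x := fun i => ⟨a i, b i, hab i⟩
  -- the sequence per component
  set U : ℕ → ∀ i, S i := fun n i => (seqCU (hna i) (a i) (ht i) n).1.2 with hU
  set C : ℕ → ∀ i, S i := fun n i => (seqCU (hna i) (a i) (ht i) n).1.1 with hC
  set X : Fin (m + 1) → ∀ i, S i := fun j => U (j : ℕ) with hX
  -- every `U n` is conjugate to `a`
  have hUconj : ∀ n : ℕ, ∃ H : ∀ i, S i, U n = H * a * H⁻¹ := by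
    intro n
    choose H hH using fun i => (seqCU (hna i) (a i) (ht i) n).2.1
    exact ⟨H, funext fun i => by simp [hU, hH i, Pi.mul_apply]⟩
  have hprimes : ∀ n : ℕ, primesOf (U n) = primesOf a := by
    intro n
    obtain ⟨H, hH⟩ := hUconj n
    rw [hH, primesOf_conj_s14]
  set g : ∀ i, S i := lnc (List.ofFn X) with hg
  have hgi : ∀ i, g i = (seqCU (hna i) (a i) (ht i) m).1.1 := by
    intro i
    rw [hg, lnc_apply, List.map_ofFn]
    rw [List.ofFn_succ]
    show lnc (X 0 i :: List.ofFn fun j : Fin m => X j.succ i) = _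
    have h0 : X 0 i = a i := rfl
    have hsucc : (fun j : Fin m => X j.succ i)
        = fun j : Fin m => (seqCU (hna i) (a i) (ht i) (j + 1)).1.2 := by
      funext j
      simp [hX, hU, Fin.val_succ]
    rw [show lnc (X 0 i :: List.ofFn fun j : Fin m => X j.succ i)
        = List.foldl pcomm (X 0 i) (List.ofFn fun j : Fin m => X j.succ i) from rfl]
    rw [h0, hsucc, seqCU_foldl]
  have hgne : ∀ i, g i ≠ 1 := fun i => (hgi i) ▸ (seqCU (hna i) (a i) (ht i) m).2.2
  have huc : IsUniformCommutator (m + 1) g :=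
    ⟨X, fun j j' => by rw [hX]; simp only []; rw [hprimes, hprimes], rfl⟩
  have hcls : ({y : (∀ i, S i) | ∃ h, y = h⁻¹ * g * h}).Finite := hFC g huc
  have hI : Finite I := by
    by_contra hIcon
    rw [not_finite_iff_infinite] at hIcon
    have hsex : ∀ i, ∃ s : S i, s⁻¹ * g i * s ≠ g i := by
      intro i
      obtain ⟨s, hs⟩ := exists_noncomm (hna i) (hgne i)
      refine ⟨s, fun hEq => hs ?_⟩
      have := congrArg (fun z => s * z) hEq
      simpa [mul_assoc] using this
    choose s hs using hsex
    set y : I → (∀ i, S i) :=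
      fun i => (Pi.mulSingle i (s i))⁻¹ * g * (Pi.mulSingle i (s i)) with hy
    have hyii : ∀ i, y i i = (s i)⁻¹ * g i * (s i) := by
      intro i
      simp [hy, Pi.mul_apply]
    have hyij : ∀ i j, j ≠ i → y i j = g j := by
      intro i j hij
      simp [hy, Pi.mul_apply, Pi.mulSingle_eq_of_ne hij]
    have hinj : Function.Injective y := by
      intro i j hEq
      by_contra hne
      have h1 : y i i = y j i := by rw [hEq]
      rw [hyii, hyij j i hne] at h1
      exact hs i h1
    have hmem : ∀ i, y i ∈ {y : (∀ i, S i) | ∃ h, y = h⁻¹ * g * h} :=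
      fun i => ⟨Pi.mulSingle i (s i), rfl⟩
    exact Set.infinite_of_injective_forall_mem hinj hmem hcls
  infer_instance
end

section
/- Let G be a profinite group and let H be a locally finite normal abstract (not necessarily closed) subgroup of G, with topological closure Ĥ. Suppose that a ∈ G is an element of finite order such that C_H(a) = 1. Then the centralizer of the image of a in G/Ĥ equals the image of C_G(a) in G/Ĥ; that is, C_{G/Ĥ}(aĤ) = C_G(a)Ĥ/Ĥ. -/
theorem stmt18 {G : Type*} [Group G] [TopologicalSpace G] [IsTopologicalGroup G]
    [CompactSpace G] [T2Space G] [TotallyDisconnectedSpace G]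
    (H : Subgroup G) (hHnormal : H.Normal)
    (hLF : ∀ s : Finset G, (↑s : Set G) ⊆ (H : Set G) →
      ∃ K : Subgroup G, K ≤ H ∧ (K : Set G).Finite ∧ (↑s : Set G) ⊆ (K : Set G))
    (a : G) (ha : IsOfFinOrder a)
    (hC : ∀ h ∈ H, a * h = h * a → h = 1) :
    -- The centralizer of the image of `a` in `G ⧸ H.topologicalClosure` is the
    -- image of `C_G(a)`: the coset of `x` commutes with the coset of `a` iff
    -- `x` lies in the same coset as some element of `C_G(a)`.
    ∀ x : G, (x * a)⁻¹ * (a * x) ∈ H.topologicalClosure ↔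
      ∃ c : G, c * a = a * c ∧ c⁻¹ * x ∈ H.topologicalClosure := by
  haveI := hHnormal
  haveI : (H.topologicalClosure).Normal := Subgroup.is_normal_topologicalClosure H
  set ψ : G → G := fun k => a⁻¹ * k * a * k⁻¹ with hψ
  -- Step 1: ψ maps H onto H.
  have stepH : ∀ g ∈ H, ∃ k ∈ H, ψ k = g := by
    intro g hg
    -- the conjugation orbit of g under powers of a
    set S : Set G := {y | ∃ i : ℤ, y = a ^ i * g * (a ^ i)⁻¹} with hS
    have hSfin : S.Finite := by
      have h1 : (Subgroup.zpowers a : Set G).Finite := ha.finite_zpowers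
      have : S ⊆ (fun b => b * g * b⁻¹) '' (Subgroup.zpowers a : Set G) := by
        rintro y ⟨i, rfl⟩
        exact ⟨a ^ i, ⟨i, rfl⟩, rfl⟩
      exact (h1.image _).subset this
    have hSH : S ⊆ (H : Set G) := by
      rintro y ⟨i, rfl⟩
      exact hHnormal.conj_mem g hg (a ^ i)
    obtain ⟨K₁, hK₁H, hK₁fin, hSK₁⟩ := hLF hSfin.toFinset (by rwa [Set.Finite.coe_toFinset])
    rw [Set.Finite.coe_toFinset] at hSK₁
    set M : Subgroup G := Subgroup.closure S with hM
    have hMK₁ : M ≤ K₁ := (Subgroup.closure_le _).2 hSK₁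
    have hMH : M ≤ H := hMK₁.trans hK₁H
    have hMfin : (M : Set G).Finite := hK₁fin.subset hMK₁
    -- M is invariant under conjugation by a⁻¹ and a
    have hconj : ∀ m ∈ M, a⁻¹ * m * a ∈ M := by
      intro m hm
      refine Subgroup.closure_induction ?_ ?_ ?_ ?_ hm
      · rintro y ⟨i, rfl⟩
        refine Subgroup.subset_closure ⟨i - 1, ?_⟩
        rw [zpow_sub, zpow_one]
        group
      · simpa using Subgroup.one_mem M
      · intro p q hp hq hp' hq'
        have : a⁻¹ * (p * q) * a = (a⁻¹ * p * a) * (a⁻¹ * q * a) := by group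
        rw [this]; exact M.mul_mem hp' hq'
      · intro p hp hp'
        have : a⁻¹ * p⁻¹ * a = (a⁻¹ * p * a)⁻¹ := by group
        rw [this]; exact M.inv_mem hp'
    haveI : Finite M := hMfin.to_subtype
    -- the map on M
    set f : M → M := fun m => ⟨ψ m, by
      have h1 : (a⁻¹ * (m : G) * a) ∈ M := hconj m m.2
      simpa [hψ, mul_assoc] using M.mul_mem h1 (M.inv_mem m.2)⟩ with hf
    have hfinj : Function.Injective f := by
      intro m₁ m₂ hEq
      have h1 : ψ (m₁ : G) = ψ (m₂ : G) := congrArg Subtype.val hEq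
      simp only [hψ] at h1
      have h3 : a⁻¹ * (m₁ : G) * a = (a⁻¹ * (m₂ : G) * a) * ((m₂ : G)⁻¹ * (m₁ : G)) := by
        calc a⁻¹ * (m₁:G) * a = (a⁻¹ * (m₁:G) * a * (m₁:G)⁻¹) * (m₁:G) := by group
          _ = (a⁻¹ * (m₂:G) * a * (m₂:G)⁻¹) * (m₁:G) := by rw [h1]
          _ = (a⁻¹ * (m₂:G) * a) * ((m₂:G)⁻¹ * (m₁:G)) := by group
      have h2 : a * ((m₂ : G)⁻¹ * m₁) = ((m₂ : G)⁻¹ * m₁) * a := by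
        have h4 : a⁻¹ * ((m₂:G)⁻¹ * (m₁:G)) * a = (m₂:G)⁻¹ * (m₁:G) := by
          calc a⁻¹ * ((m₂:G)⁻¹ * (m₁:G)) * a
              = (a⁻¹ * (m₂:G) * a)⁻¹ * (a⁻¹ * (m₁:G) * a) := by group
            _ = (a⁻¹ * (m₂:G) * a)⁻¹ * ((a⁻¹ * (m₂:G) * a) * ((m₂:G)⁻¹ * (m₁:G))) := by rw [h3]
            _ = (m₂:G)⁻¹ * (m₁:G) := by group
        have h6 : ((m₂:G)⁻¹ * (m₁:G)) * a = a * (a⁻¹ * ((m₂:G)⁻¹ * (m₁:G)) * a) := by group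
        rw [h6, h4]
      have h5 : ((m₂ : G)⁻¹ * m₁ : G) ∈ H := hMH (M.mul_mem (M.inv_mem m₂.2) m₁.2)
      have h6 := hC _ h5 h2
      have : (m₁ : G) = m₂ := by
        have := mul_eq_one_iff_inv_eq.mp h6
        simpa using this.symm
      exact Subtype.ext this
    have hfsurj : Function.Surjective f := Finite.injective_iff_surjective.mp hfinj
    have hgM : g ∈ M := Subgroup.subset_closure ⟨0, by simp⟩
    obtain ⟨k, hk⟩ := hfsurj ⟨g, hgM⟩
    exact ⟨k, hMH k.2, congrArg Subtype.val hk⟩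
  -- Step 2: ψ maps the closure of H onto itself.
  have hψcont : Continuous ψ := by fun_prop
  have hKcompact : IsCompact (closure (H : Set G)) := isClosed_closure.isCompact
  have himage : IsClosed (ψ '' closure (H : Set G)) :=
    (hKcompact.image hψcont).isClosed
  have hHsub : (H : Set G) ⊆ ψ '' closure (H : Set G) := by
    intro g hg
    obtain ⟨k, hkH, hk⟩ := stepH g hg
    exact ⟨k, subset_closure hkH, hk⟩
  have hstep2 : closure (H : Set G) ⊆ ψ '' closure (H : Set G) :=
    closure_minimal hHsub himage
  have hKcoe : (H.topologicalClosure : Set G) = closure (H : Set G) := rfl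
  -- Main proof
  intro x
  constructor
  · intro hx
    have hg : a⁻¹ * x⁻¹ * a * x ∈ closure (H : Set G) := by
      have : (x * a)⁻¹ * (a * x) = a⁻¹ * x⁻¹ * a * x := by group
      rw [← this]; exact hx
    obtain ⟨k, hkK, hk⟩ := hstep2 hg
    refine ⟨x * k, ?_, ?_⟩
    · -- (x*k) commutes with a, since ψ k = a⁻¹x⁻¹ax
      have h1 : a⁻¹ * k * a = (a⁻¹ * x⁻¹ * a * x) * k := by
        rw [← hk]; simp only [hψ]; group
      have : a⁻¹ * (x * k)⁻¹ * a * (x * k) = 1 := by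
        have h2 : a⁻¹ * k⁻¹ * a = ((a⁻¹ * x⁻¹ * a * x) * k)⁻¹ := by
          rw [← h1]; group
        calc a⁻¹ * (x * k)⁻¹ * a * (x * k)
            = (a⁻¹ * k⁻¹ * a) * (a⁻¹ * x⁻¹ * a * x) * k := by group
          _ = ((a⁻¹ * x⁻¹ * a * x) * k)⁻¹ * (a⁻¹ * x⁻¹ * a * x) * k := by rw [h2]
          _ = 1 := by group
      have h5 : (x*k)⁻¹ * a * (x*k) = a := by
        calc (x*k)⁻¹ * a * (x*k) = a * (a⁻¹ * (x*k)⁻¹ * a * (x*k)) := by group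
          _ = a * 1 := by rw [this]
          _ = a := mul_one a
      have h6 : a * (x*k) = (x*k) * ((x*k)⁻¹ * a * (x*k)) := by group
      rw [h6, h5]
    · have : (x * k)⁻¹ * x = k⁻¹ := by group
      rw [this]
      exact (H.topologicalClosure).inv_mem (by rwa [← hKcoe] at hkK)
  · rintro ⟨c, hc, hk⟩
    set k := c⁻¹ * x with hkdef
    have hxck : x = c * k := by rw [hkdef]; group
    have hconj : a⁻¹ * k⁻¹ * a ∈ H.topologicalClosure := by
      have h1 : k⁻¹ ∈ H.topologicalClosure := (H.topologicalClosure).inv_mem hk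
      have := Subgroup.Normal.conj_mem ‹(H.topologicalClosure).Normal› _ h1 a⁻¹
      simpa [mul_assoc] using this
    have heq : (x * a)⁻¹ * (a * x) = (a⁻¹ * k⁻¹ * a) * k := by
      rw [hxck]
      have hca : c⁻¹ * a * c = a := by rw [mul_assoc, ← hc]; group
      calc (c * k * a)⁻¹ * (a * (c * k))
          = a⁻¹ * k⁻¹ * (c⁻¹ * a * c) * k := by group
        _ = a⁻¹ * k⁻¹ * a * k := by rw [hca]
        _ = (a⁻¹ * k⁻¹ * a) * k := by group
    rw [heq]
    exact (H.topologicalClosure).mul_mem hconj hk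
end
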